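/- arXiv:1507.06900 — 7 statements merged into one kernel-verified Lean document; each statement's English description precedes it below -/
import Mathlib

section
/- Let p, q ∈ ℝ^m be probability distributions such that q has full rank, H(p) < H(q), and q ≠ (1/m,…,1/m). Then there exist δ ∈ (0, min_i q_i) and N ∈ ℕ such that, setting a_i := q_i − δ and letting q_{AB} be the corresponding bipartite extension of q with parameter n, the following holds for all n ≥ N: H_α(p ⊗ q_B) < H_α(q_{AB}) for all real α ≥ 1, and also H_∞(p ⊗ q_B) < H_∞(q_{AB}). -/
open scoped BigOperators

/-- `p` is a probability distribution on the finite type `ι`. -/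
def IsProbDist {ι : Type*} [Fintype ι] (p : ι → ℝ) : Prop :=
  (∀ i, 0 ≤ p i) ∧ ∑ i, p i = 1

/-- `p` is a probability distribution with strictly positive entries. -/
def IsPosProbDist {ι : Type*} [Fintype ι] (p : ι → ℝ) : Prop :=
  (∀ i, 0 < p i) ∧ ∑ i, p i = 1

/-- `p` majorizes `q`: for every `k`, the sum of the `k` largest entries of `p` is at least
the sum of the `k` largest entries of `q`.  For nonnegative vectors this is equivalent to:
for every set `A` of indices of `q` there is a set `B` of indices of `p` with `|B| ≤ |A|`
whose `p`-sum dominates the `q`-sum over `A`. -/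
def Majorizes {ι κ : Type*} [Fintype ι] [Fintype κ] (p : ι → ℝ) (q : κ → ℝ) : Prop :=
  ∀ A : Finset κ, ∃ B : Finset ι, B.card ≤ A.card ∧ ∑ j ∈ A, q j ≤ ∑ i ∈ B, p i

/-- Kronecker (tensor) product of two vectors. -/
def kron {ι κ : Type*} (p : ι → ℝ) (q : κ → ℝ) : ι × κ → ℝ :=
  fun x => p x.1 * q x.2

/-- Shannon entropy (natural logarithm; note `Real.log 0 = 0`, so `0 log 0 = 0`). -/
noncomputable def shannonEntropy {ι : Type*} [Fintype ι] (p : ι → ℝ) : ℝ :=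
  -∑ i, p i * Real.log (p i)

open Classical in
/-- The number of nonzero entries of `p`. -/
noncomputable def distRank {ι : Type*} [Fintype ι] (p : ι → ℝ) : ℕ :=
  (Finset.univ.filter fun i => p i ≠ 0).card

/-- Marginal of a `k`-partite distribution on its `i`-th factor. -/
noncomputable def marginal {k : ℕ} {d : Fin k → ℕ} (r : (∀ i, Fin (d i)) → ℝ) (i : Fin k) :
    Fin (d i) → ℝ :=
  fun b => ∑ y : ∀ j, Fin (d j), if y i = b then r y else 0

open Classical in
/-- Rényi entropy of order `α` (with `H₁` being the Shannon entropy). -/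
noncomputable def renyi {ι : Type*} [Fintype ι] (α : ℝ) (p : ι → ℝ) : ℝ :=
  if α = 1 then shannonEntropy p
  else (Real.sign α / (1 - α)) * Real.log (∑ i, p i ^ α)

/-- Min-entropy `H_∞(p) = -log (max_i p_i)`. -/
noncomputable def renyiInf {ι : Type*} [Fintype ι] (p : ι → ℝ) : ℝ :=
  -Real.log (⨆ i, p i)

/-- Burg entropy `H_Burg(p) = (1/m) ∑ log p_i`. -/
noncomputable def burg {ι : Type*} [Fintype ι] (p : ι → ℝ) : ℝ :=
  (1 / (Fintype.card ι : ℝ)) * ∑ i, Real.log (p i)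

open Classical in
/-- Rényi entropy as an extended real: it is `-∞` for `α < 0` when `p` has a zero entry. -/
noncomputable def renyiE {ι : Type*} [Fintype ι] (α : ℝ) (p : ι → ℝ) : EReal :=
  if α < 0 ∧ ∃ i, p i = 0 then ⊥ else (renyi α p : EReal)

open Classical in
/-- Burg entropy as an extended real: it is `-∞` when `p` has a zero entry. -/
noncomputable def burgE {ι : Type*} [Fintype ι] (p : ι → ℝ) : EReal :=
  if ∃ i, p i = 0 then ⊥ else (burg p : EReal)

/-- `p` trumps `q`: there is a catalyst distribution `r` with `p ⊗ r ≻ q ⊗ r`. -/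
def Trumps {ι κ : Type*} [Fintype ι] [Fintype κ] (p : ι → ℝ) (q : κ → ℝ) : Prop :=
  ∃ (n : ℕ) (r : Fin n → ℝ), IsProbDist r ∧ Majorizes (kron p r) (kron q r)

/-- The bipartite extension `q_{AB}` of `q` with parameters `a i ∈ [0, q i]` and `n`:
the `m × (n+1)` matrix whose first column is `(q i - a i)` and whose remaining `n`
columns all equal `(a i / n)`. -/
noncomputable def qAB {m : ℕ} (q a : Fin m → ℝ) (n : ℕ) : Fin m × Fin (n + 1) → ℝ :=
  fun x => if x.2 = 0 then q x.1 - a x.1 else a x.1 / n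

/-- The `B`-marginal `(1 - a, a/n, …, a/n)` of `qAB`, where `a = ∑ i, a i`. -/
noncomputable def qBext {m : ℕ} (a : Fin m → ℝ) (n : ℕ) : Fin (n + 1) → ℝ :=
  fun j => if j = 0 then 1 - ∑ i, a i else (∑ i, a i) / n

/-- Symmetry of an entropy-like functional on positive distributions. -/
def SymmetricS (S : ∀ n : ℕ, (Fin n → ℝ) → ℝ) : Prop :=
  ∀ (n : ℕ) (p : Fin n → ℝ), IsPosProbDist p →
    ∀ σ : Equiv.Perm (Fin n), S n (p ∘ σ) = S n p

/-- Additivity: `S(p ⊗ q) = S(p) + S(q)`. -/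
def AdditiveS (S : ∀ n : ℕ, (Fin n → ℝ) → ℝ) : Prop :=
  ∀ (m n : ℕ) (p : Fin m → ℝ) (q : Fin n → ℝ), IsPosProbDist p → IsPosProbDist q →
    S (m * n) (fun x => kron p q (finProdFinEquiv.symm x)) = S m p + S n q

/-- Subadditivity: `S(p_{AB}) ≤ S(p_A ⊗ p_B)` for bipartite distributions. -/
def SubadditiveS (S : ∀ n : ℕ, (Fin n → ℝ) → ℝ) : Prop :=
  ∀ (m n : ℕ) (P : Fin m × Fin n → ℝ), IsPosProbDist P →
    S (m * n) (fun x => P (finProdFinEquiv.symm x)) ≤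
      S (m * n) (fun x =>
        kron (fun i => ∑ j, P (i, j)) (fun j => ∑ i, P (i, j)) (finProdFinEquiv.symm x))

/-- Continuity of `S` on each simplex of positive distributions. -/
def ContinuousS (S : ∀ n : ℕ, (Fin n → ℝ) → ℝ) : Prop :=
  ∀ n : ℕ, ContinuousOn (S n) {p : Fin n → ℝ | IsPosProbDist p}


private lemma rpow_eq_exp' {c : ℝ} (hc : 0 < c) (α : ℝ) :
    c ^ α = c * Real.exp ((α - 1) * Real.log c) := by
  rw [Real.rpow_def_of_pos hc]
  rw [show Real.log c * α = Real.log c + (α - 1) * Real.log c by ring, Real.exp_add,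
    Real.exp_log hc]

private lemma rpow_ge_tangent {c : ℝ} (hc : 0 ≤ c) {α : ℝ} (hα : 1 ≤ α) :
    c + c * Real.log c * (α - 1) ≤ c ^ α := by
  rcases eq_or_lt_of_le hc with h | h
  · simp [← h, Real.zero_rpow (by linarith : α ≠ 0)]
  · rw [rpow_eq_exp' h α]
    have h1 := Real.add_one_le_exp ((α - 1) * Real.log c)
    nlinarith [h.le]

private lemma rpow_le_quad {c : ℝ} (hc : 0 < c) {α : ℝ} (hα : 1 ≤ α)
    (hsmall : (α - 1) * |Real.log c| ≤ 1) :
    c ^ α ≤ c + c * Real.log c * (α - 1) + c * (Real.log c) ^ 2 * (α - 1) ^ 2 := by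
  rw [rpow_eq_exp' hc α]
  set y := (α - 1) * Real.log c with hy
  have habs : |y| ≤ 1 := by
    rw [hy, abs_mul, abs_of_nonneg (by linarith : (0:ℝ) ≤ α - 1)]
    exact hsmall
  have h2 := Real.abs_exp_sub_one_sub_id_le habs
  have h3 : Real.exp y ≤ 1 + y + y ^ 2 := by
    have := abs_le.1 h2
    linarith [this.2]
  calc c * Real.exp y ≤ c * (1 + y + y ^ 2) := mul_le_mul_of_nonneg_left h3 hc.le
    _ = c + c * Real.log c * (α - 1) + c * (Real.log c) ^ 2 * (α - 1) ^ 2 := by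
        rw [hy]; ring

private lemma rpow_le_self_of_le_one {c : ℝ} (hc : 0 ≤ c) (hc1 : c ≤ 1) {α : ℝ} (hα : 1 ≤ α) :
    c ^ α ≤ c := by
  rcases eq_or_lt_of_le hc with h | h
  · simp [← h, Real.zero_rpow (by linarith : α ≠ 0)]
  · calc c ^ α ≤ c ^ (1:ℝ) := Real.rpow_le_rpow_of_exponent_ge h hc1 hα
      _ = c := Real.rpow_one c

private lemma sum_mul_log_mul {ι : Type*} [Fintype ι] {c : ℝ} (hc : 0 < c) (p : ι → ℝ)
    (hp : ∀ i, 0 ≤ p i) :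
    ∑ i, (c * p i) * Real.log (c * p i)
      = (∑ i, p i) * (c * Real.log c) + c * ∑ i, p i * Real.log (p i) := by
  have key : ∀ i, (c * p i) * Real.log (c * p i)
      = (p i) * (c * Real.log c) + c * (p i * Real.log (p i)) := by
    intro i
    rcases eq_or_lt_of_le (hp i) with h | h
    · simp [← h]
    · rw [Real.log_mul hc.ne' h.ne']; ring
  simp only [key, Finset.sum_add_distrib, ← Finset.sum_mul, ← Finset.mul_sum]

private lemma sum_rpow_kron {ι κ : Type*} [Fintype ι] [Fintype κ]
    (p : ι → ℝ) (r : κ → ℝ) (hp : ∀ i, 0 ≤ p i) (hr : ∀ j, 0 ≤ r j) (α : ℝ) :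
    ∑ x : ι × κ, (kron p r x) ^ α = (∑ i, p i ^ α) * (∑ j, r j ^ α) := by
  rw [Fintype.sum_prod_type, Finset.sum_mul_sum]
  exact Finset.sum_congr rfl fun i _ => Finset.sum_congr rfl fun j _ =>
    Real.mul_rpow (hp i) (hr j)

private lemma shannon_kron {ι κ : Type*} [Fintype ι] [Fintype κ]
    (p : ι → ℝ) (r : κ → ℝ) (hp : ∀ i, 0 ≤ p i) (hr : ∀ j, 0 ≤ r j) :
    shannonEntropy (kron p r) =
      (∑ j, r j) * shannonEntropy p + (∑ i, p i) * shannonEntropy r := by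
  have key : ∀ (i : ι) (j : κ), p i * r j * Real.log (p i * r j) =
      r j * (p i * Real.log (p i)) + p i * (r j * Real.log (r j)) := by
    intro i j
    rcases eq_or_lt_of_le (hp i) with h | h
    · simp [← h]
    rcases eq_or_lt_of_le (hr j) with h' | h'
    · simp [← h']
    rw [Real.log_mul h.ne' h'.ne']; ring
  unfold shannonEntropy kron
  rw [Fintype.sum_prod_type]
  simp only [key, Finset.sum_add_distrib, ← Finset.mul_sum, ← Finset.sum_mul]
  ring

private lemma sum_if_const (n : ℕ) (x y : ℝ) :
    ∑ j : Fin (n+1), (if j = 0 then x else y) = x + n * y := by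
  rw [Fin.sum_univ_succ]
  simp [Fin.succ_ne_zero]

private lemma sum_mullog_if_const (n : ℕ) (x y : ℝ) :
    ∑ j : Fin (n+1), ((if j = 0 then x else y) * Real.log (if j = 0 then x else y))
      = x * Real.log x + n * (y * Real.log y) := by
  rw [Fin.sum_univ_succ]
  simp [Fin.succ_ne_zero]

private lemma sum_rpow_if_const (n : ℕ) (x y α : ℝ) :
    ∑ j : Fin (n+1), (if j = 0 then x else y) ^ α = x ^ α + n * y ^ α := by
  rw [Fin.sum_univ_succ]
  simp [Fin.succ_ne_zero]

set_option maxHeartbeats 2000000 in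
private lemma core_lemma {m : ℕ} (p q : Fin m → ℝ) (δ ε c₀ K P α₀ ν : ℝ)
    (hm : 1 ≤ (m:ℝ))
    (hp0 : ∀ i, 0 ≤ p i) (hp1 : ∑ i, p i = 1)
    (hc₀def : c₀ = Real.log m + ∑ i, p i * Real.log (p i)) (hc₀ : 0 < c₀)
    (hqδ : ∀ i, 0 < q i - δ) (hqδ1 : ∀ i, q i - δ ≤ 1)
    (hSq : ∑ i, (q i - δ) = 1 - ↑m*δ)
    (hδ : 0 < δ) (hδ1 : δ ≤ 1)
    (hKdef : K = ∑ i, (q i - δ)*(Real.log (q i - δ))^2)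
    (hεΛ : ∀ i, ε * |Real.log (q i - δ)| ≤ 1)
    (hE : (∑ i, (q i - δ)*Real.log (q i - δ))
        - (1 - ↑m*δ)*(∑ i, p i * Real.log (p i)) - (1 - ↑m*δ)*Real.log (1 - ↑m*δ) < 0)
    (hε : 0 < ε) (hε1 : ε ≤ 1)
    (hεK : K*ε < ↑m*(δ*δ)*c₀)
    (hPub : ∀ i, p i ≤ P) (hPmem : ∃ i, p i = P)
    (hmP : 1 < ↑m*P)
    (hα₀ : 2 ≤ α₀) (h2m : 2*↑m < (↑m*P)^α₀)
    (hν1 : 1 ≤ ν) (hν4 : (2/δ)*(2/δ) ≤ ν)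
    (hνε : 1/(δ^α₀*c₀*ε) + 1 ≤ ν^ε)
    {α : ℝ} (hα : 1 < α) :
    ↑m*δ^α + ν^((1:ℝ)-α) * (∑ i, (q i - δ)^α)
      < (∑ i, p i^α) * ((↑m*δ)^α + ν^((1:ℝ)-α)*(1 - ↑m*δ)^α) := by
  have hm1 : 1 ≤ m := by exact_mod_cast hm
  haveI : Nonempty (Fin m) := ⟨⟨0, hm1⟩⟩
  have hmδ : 0 < 1 - ↑m*δ := by
    rw [← hSq]
    exact Finset.sum_pos (fun i _ => hqδ i) Finset.univ_nonempty
  have hν0 : (0:ℝ) < ν := by linarith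
  set w := ν^((1:ℝ)-α) with hw
  have hw0 : 0 < w := Real.rpow_pos_of_pos hν0 _
  have hw1 : w ≤ 1 := Real.rpow_le_one_of_one_le_of_nonpos hν1 (by linarith)
  have hδα : 0 < δ^α := Real.rpow_pos_of_pos hδ α
  set T := ∑ i, (q i - δ)^α with hT
  have hT0 : 0 ≤ T := Finset.sum_nonneg fun i _ => (Real.rpow_pos_of_pos (hqδ i) α).le
  have hTle : T ≤ ↑m := by
    calc T ≤ ∑ _i : Fin m, (1:ℝ) :=
          Finset.sum_le_sum fun i _ => by
            calc (q i - δ)^α ≤ q i - δ := rpow_le_self_of_le_one (hqδ i).le (hqδ1 i) hα.le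
              _ ≤ 1 := hqδ1 i
      _ = ↑m := by simp
  set s := ∑ i, p i^α with hs
  have hs0 : 0 ≤ s := Finset.sum_nonneg fun i _ => Real.rpow_nonneg (hp0 i) α
  -- key lower bound: m*δ^α + δ^α*(α-1)*(m*c₀) ≤ s*(m*δ)^α
  have hA : ↑m*δ^α + δ^α*(α-1)*(↑m*c₀) ≤ s*(↑m*δ)^α := by
    have e2 : ((m:ℝ)*δ)^α = (m:ℝ)^α*δ^α := Real.mul_rpow (by positivity) hδ.le
    have e1 : ∀ i : Fin m, ((m:ℝ) * p i)^α = (m:ℝ)^α * (p i)^α := fun i =>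
      Real.mul_rpow (by positivity) (hp0 i)
    have hsum : ∑ i, ((m:ℝ) * p i)^α = (m:ℝ)^α * s := by
      rw [hs, Finset.mul_sum]
      exact Finset.sum_congr rfl fun i _ => e1 i
    have htan : ↑m + (α-1)*(↑m*c₀) ≤ ∑ i, ((m:ℝ) * p i)^α := by
      have hlogsum := sum_mul_log_mul (show (0:ℝ) < m by linarith) p hp0
      calc ↑m + (α-1)*(↑m*c₀)
          = ∑ i, ((m:ℝ)*p i + ((m:ℝ)*p i)*Real.log ((m:ℝ)*p i)*(α-1)) := by
            rw [Finset.sum_add_distrib, ← Finset.mul_sum, hp1, ← Finset.sum_mul, hlogsum,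
              hp1, hc₀def]
            ring
        _ ≤ ∑ i, ((m:ℝ) * p i)^α :=
            Finset.sum_le_sum fun i _ =>
              rpow_ge_tangent (mul_nonneg (by positivity) (hp0 i)) hα.le
    calc ↑m*δ^α + δ^α*(α-1)*(↑m*c₀) = δ^α * (↑m + (α-1)*(↑m*c₀)) := by ring
      _ ≤ δ^α * ((m:ℝ)^α * s) := by
          rw [← hsum]; exact mul_le_mul_of_nonneg_left htan hδα.le
      _ = s*(↑m*δ)^α := by rw [e2]; ring
  by_cases hcase1 : α ≤ 1 + ε
  · -- regime 1 : 1 < α ≤ 1+ε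
    have hTub : T ≤ (1 - ↑m*δ) + (∑ i, (q i - δ)*Real.log (q i - δ))*(α-1) + K*(α-1)^2 := by
      have hterm : ∀ i ∈ Finset.univ, (q i - δ)^α ≤ (q i - δ) + (q i - δ)*Real.log (q i - δ)*(α-1)
          + (q i - δ)*(Real.log (q i - δ))^2*(α-1)^2 := by
        intro i _
        apply rpow_le_quad (hqδ i) hα.le
        calc (α-1)*|Real.log (q i - δ)| ≤ ε*|Real.log (q i - δ)| :=
              mul_le_mul_of_nonneg_right (by linarith) (abs_nonneg _)
          _ ≤ 1 := hεΛ i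
      calc T ≤ ∑ i, ((q i - δ) + (q i - δ)*Real.log (q i - δ)*(α-1)
            + (q i - δ)*(Real.log (q i - δ))^2*(α-1)^2) := Finset.sum_le_sum hterm
        _ = (1 - ↑m*δ) + (∑ i, (q i - δ)*Real.log (q i - δ))*(α-1) + K*(α-1)^2 := by
            rw [hKdef, Finset.sum_add_distrib, Finset.sum_add_distrib, ← Finset.sum_mul,
              ← Finset.sum_mul, hSq]
    have hDlb : (1 - ↑m*δ) + ((1-↑m*δ)*(∑ i, p i*Real.log (p i))
        + (1-↑m*δ)*Real.log (1-↑m*δ))*(α-1) ≤ s*(1-↑m*δ)^α := by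
      have e3 : s*(1-↑m*δ)^α = ∑ i, ((1-↑m*δ)*(p i))^α := by
        rw [hs, Finset.sum_mul]
        exact Finset.sum_congr rfl fun i _ => by
          rw [Real.mul_rpow hmδ.le (hp0 i)]; ring
      have hlogsum := sum_mul_log_mul hmδ p hp0
      calc (1 - ↑m*δ) + ((1-↑m*δ)*(∑ i, p i*Real.log (p i))
            + (1-↑m*δ)*Real.log (1-↑m*δ))*(α-1)
          = ∑ i, ((1-↑m*δ)*p i + ((1-↑m*δ)*p i)*Real.log ((1-↑m*δ)*p i)*(α-1)) := by
            rw [Finset.sum_add_distrib, ← Finset.mul_sum, hp1, ← Finset.sum_mul, hlogsum, hp1]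
            ring
        _ ≤ ∑ i, ((1-↑m*δ)*(p i))^α :=
            Finset.sum_le_sum fun i _ =>
              rpow_ge_tangent (mul_nonneg hmδ.le (hp0 i)) hα.le
        _ = s*(1-↑m*δ)^α := e3.symm
    have hX : w*T - w*(s*(1-↑m*δ)^α) ≤ K*(α-1)^2 := by
      set E := (∑ i, (q i - δ)*Real.log (q i - δ))
        - (1 - ↑m*δ)*(∑ i, p i * Real.log (p i)) - (1 - ↑m*δ)*Real.log (1 - ↑m*δ) with hEdef
      have hXle : T - s*(1-↑m*δ)^α ≤ E*(α-1) + K*(α-1)^2 := by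
        have := hTub; have := hDlb
        rw [hEdef]; linarith
      have t0 : w*(T - s*(1-↑m*δ)^α) ≤ w*(E*(α-1) + K*(α-1)^2) :=
        mul_le_mul_of_nonneg_left hXle hw0.le
      have t1 : w*(E*(α-1)) ≤ 0 := by
        have : E*(α-1) ≤ 0 := mul_nonpos_of_nonpos_of_nonneg hE.le (by linarith)
        exact mul_nonpos_of_nonneg_of_nonpos hw0.le this
      have hK0' : 0 ≤ K := by
        rw [hKdef]
        exact Finset.sum_nonneg fun i _ => mul_nonneg (hqδ i).le (sq_nonneg _)
      have hKsq : 0 ≤ K*(α-1)^2 := mul_nonneg hK0' (sq_nonneg _)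
      have t2 : w*(K*(α-1)^2) ≤ K*(α-1)^2 := by
        nlinarith [mul_nonneg (sub_nonneg.2 hw1) hKsq]
      have t3 : w*(E*(α-1) + K*(α-1)^2) = w*(E*(α-1)) + w*(K*(α-1)^2) := by ring
      have t4 : w*(T - s*(1-↑m*δ)^α) = w*T - w*(s*(1-↑m*δ)^α) := by ring
      linarith
    have hK0 : 0 ≤ K := by
      rw [hKdef]; exact Finset.sum_nonneg fun i _ => mul_nonneg (hqδ i).le (sq_nonneg _)
    have hstr : K*(α-1)^2 < δ^α*(α-1)*(↑m*c₀) := by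
      have hδ2 : δ*δ ≤ δ^α := by
        have : δ*δ = δ^((2:ℕ):ℝ) := by rw [Real.rpow_natCast]; ring
        rw [this]
        exact Real.rpow_le_rpow_of_exponent_ge hδ hδ1 (by push_cast; linarith)
      have hKa : 0 ≤ K*(α-1) := mul_nonneg hK0 (by linarith)
      have h1' : (K*(α-1))*(α-1) ≤ (K*(α-1))*ε :=
        mul_le_mul_of_nonneg_left (show α-1 ≤ ε by linarith) hKa
      have e1 : K*(α-1)^2 = (K*(α-1))*(α-1) := by ring
      have e2 : K*ε*(α-1) = (K*(α-1))*ε := by ring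
      have h1 : K*(α-1)^2 ≤ K*ε*(α-1) := by rw [e1, e2]; exact h1'
      have h2 : K*ε*(α-1) < ↑m*(δ*δ)*c₀*(α-1) :=
        mul_lt_mul_of_pos_right hεK (by linarith)
      have h0 : 0 ≤ (α-1)*(↑m*c₀) :=
        mul_nonneg (by linarith) (mul_nonneg (Nat.cast_nonneg m) hc₀.le)
      have h3' : (δ*δ)*((α-1)*(↑m*c₀)) ≤ δ^α*((α-1)*(↑m*c₀)) :=
        mul_le_mul_of_nonneg_right hδ2 h0
      have e3 : ↑m*(δ*δ)*c₀*(α-1) = (δ*δ)*((α-1)*(↑m*c₀)) := by ring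
      have e4 : δ^α*(α-1)*(↑m*c₀) = δ^α*((α-1)*(↑m*c₀)) := by ring
      linarith
    have expand : s*((↑m*δ)^α + w*(1-↑m*δ)^α) = s*(↑m*δ)^α + w*(s*(1-↑m*δ)^α) := by ring
    rw [expand]
    linarith
  · push_neg at hcase1
    by_cases hcase2 : α ≤ α₀
    · -- regime 2 : 1+ε ≤ α ≤ α₀
      have hwle : w ≤ ν^(-ε) := Real.rpow_le_rpow_of_exponent_le hν1 (by linarith)
      have hd : 0 < δ^α₀*c₀*ε := by positivity
      have hνepos : 0 < ν^ε := Real.rpow_pos_of_pos hν0 ε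
      have hW : ν^(-ε) < δ^α₀*c₀*ε := by
        rw [Real.rpow_neg hν0.le]
        have h5 : 1/(δ^α₀*c₀*ε) < ν^ε := by linarith
        calc (ν^ε)⁻¹ < (1/(δ^α₀*c₀*ε))⁻¹ := by
              apply inv_strictAnti₀ (by positivity) h5
          _ = δ^α₀*c₀*ε := by rw [one_div, inv_inv]
      have hδα₀ : δ^α₀ ≤ δ^α := Real.rpow_le_rpow_of_exponent_ge hδ hδ1 hcase2
      have h6 : w*T ≤ ν^(-ε)*↑m := by
        have := Real.rpow_pos_of_pos hν0 (-ε)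
        calc w*T ≤ ν^(-ε)*T := mul_le_mul_of_nonneg_right hwle hT0
          _ ≤ ν^(-ε)*↑m := mul_le_mul_of_nonneg_left hTle this.le
      have h7 : ν^(-ε)*↑m < δ^α₀*c₀*ε*↑m := mul_lt_mul_of_pos_right hW (by linarith)
      have h8 : δ^α₀*c₀*ε*↑m ≤ δ^α*(α-1)*(↑m*c₀) := by
        have hcm : 0 ≤ c₀*ε*↑m :=
          mul_nonneg (mul_nonneg hc₀.le hε.le) (Nat.cast_nonneg m)
        have s1 : δ^α₀*(c₀*ε*↑m) ≤ δ^α*(c₀*ε*↑m) :=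
          mul_le_mul_of_nonneg_right hδα₀ hcm
        have hcm2 : 0 ≤ δ^α*c₀*↑m :=
          mul_nonneg (mul_nonneg hδα.le hc₀.le) (Nat.cast_nonneg m)
        have s2 : (δ^α*c₀*↑m)*ε ≤ (δ^α*c₀*↑m)*(α-1) :=
          mul_le_mul_of_nonneg_left (by linarith) hcm2
        have e1 : δ^α₀*c₀*ε*↑m = δ^α₀*(c₀*ε*↑m) := by ring
        have e2 : δ^α*(c₀*ε*↑m) = (δ^α*c₀*↑m)*ε := by ring
        have e3 : (δ^α*c₀*↑m)*(α-1) = δ^α*(α-1)*(↑m*c₀) := by ring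
        linarith
      have h9 : 0 ≤ w*(1-↑m*δ)^α * s :=
        mul_nonneg (mul_nonneg hw0.le (Real.rpow_nonneg hmδ.le α)) hs0
      have expand : s*((↑m*δ)^α + w*(1-↑m*δ)^α) = s*(↑m*δ)^α + w*(1-↑m*δ)^α*s := by ring
      rw [expand]
      linarith
    · -- regime 3 : α₀ < α
      push_neg at hcase2
      have hα2 : (2:ℝ) ≤ α := by linarith
      have hge : (↑m*P)^α₀ ≤ (↑m*P)^α :=
        Real.rpow_le_rpow_of_exponent_le hmP.le hcase2.le
      obtain ⟨iP, hiP⟩ := hPmem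
      have hP0 : 0 ≤ P := hiP ▸ hp0 iP
      have hsge : P^α ≤ s := by
        rw [hs, ← hiP]
        exact Finset.single_le_sum (fun i _ => Real.rpow_nonneg (hp0 i) α)
          (Finset.mem_univ iP)
      have key1 : (↑m*P)^α*δ^α ≤ s*(↑m*δ)^α := by
        have e2 : ((m:ℝ)*δ)^α = (m:ℝ)^α*δ^α := Real.mul_rpow (by positivity) hδ.le
        have e4 : ((m:ℝ)*P)^α = (m:ℝ)^α*P^α := Real.mul_rpow (by positivity) hP0
        rw [e2, e4]
        have hmα : 0 ≤ (m:ℝ)^α := Real.rpow_nonneg (by positivity) α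
        have t := mul_le_mul_of_nonneg_right hsge (mul_nonneg hmα hδα.le)
        have e5 : P^α*(↑m^α*δ^α) = ↑m^α*P^α*δ^α := by ring
        linarith
      -- w ≤ (δ/2)^α
      have h2δ : 1 ≤ 2/δ := by rw [le_div_iff₀ hδ]; linarith
      have hlog2δ : 0 ≤ Real.log (2/δ) := Real.log_nonneg h2δ
      have hlogν0 : 0 ≤ Real.log ν := Real.log_nonneg hν1
      have hlogν : 2*Real.log (2/δ) ≤ Real.log ν := by
        calc 2*Real.log (2/δ) = Real.log ((2/δ)*(2/δ)) := by
              rw [Real.log_mul (by positivity) (by positivity)]; ring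
          _ ≤ Real.log ν := Real.log_le_log (by positivity) hν4
      have hwle : w ≤ (δ/2)^α := by
        rw [hw, Real.rpow_def_of_pos hν0, Real.rpow_def_of_pos (by positivity : (0:ℝ) < δ/2)]
        apply Real.exp_le_exp.2
        have hlogδ2 : Real.log (δ/2) = -Real.log (2/δ) := by
          rw [← Real.log_inv, inv_div]
        rw [hlogδ2]
        nlinarith
      have hhalf : ((1:ℝ)/2)^α ≤ 1 :=
        Real.rpow_le_one (by norm_num) (by norm_num) (by linarith)
      have hδ2exp : (δ/2)^α = δ^α*(1/2)^α := by
        rw [show δ/2 = δ*(1/2) by ring, Real.mul_rpow hδ.le (by norm_num)]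
      have h10 : w*T ≤ δ^α*(1/2)^α*↑m := by
        calc w*T ≤ (δ/2)^α*↑m := by
              apply mul_le_mul hwle hTle hT0 (Real.rpow_nonneg (by positivity) α)
          _ = δ^α*(1/2)^α*↑m := by rw [hδ2exp]
      have h11 : δ^α*(1/2)^α*↑m ≤ δ^α*↑m := by
        have t := mul_le_mul_of_nonneg_right hhalf
          (mul_nonneg hδα.le (Nat.cast_nonneg m))
        have e6 : (1/2)^α*(δ^α*↑m) = δ^α*(1/2)^α*↑m := by ring
        have e7 : (1:ℝ)*(δ^α*↑m) = δ^α*↑m := by ring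
        linarith
      have h13 : 2*↑m*δ^α < (↑m*P)^α*δ^α := by
        have : 2*↑m < (↑m*P)^α := lt_of_lt_of_le h2m hge
        nlinarith
      have h9 : 0 ≤ w*(1-↑m*δ)^α*s :=
        mul_nonneg (mul_nonneg hw0.le (Real.rpow_nonneg hmδ.le α)) hs0
      have expand : s*((↑m*δ)^α + w*(1-↑m*δ)^α) = s*(↑m*δ)^α + w*(1-↑m*δ)^α*s := by ring
      rw [expand]
      linarith


set_option maxHeartbeats 4000000 in
/-- **Lemma 1.** If `q` has full rank, `H(p) < H(q)` and `q` is not uniform,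
then there are `δ ∈ (0, min_i q_i)` and `N` such that, with `a_i := q_i - δ`, for all
`n ≥ N`: `H_α(p ⊗ q_B) < H_α(q_{AB})` for all real `α ≥ 1`, and also for `α = ∞`. -/
theorem lemma_part1 {m : ℕ} (p q : Fin m → ℝ)
    (hp : IsProbDist p) (hq : IsProbDist q)
    (hq_rank : ∀ i, q i ≠ 0) (hH : shannonEntropy p < shannonEntropy q)
    (hq_ne : q ≠ fun _ => 1 / (m : ℝ)) :
    ∃ δ : ℝ, 0 < δ ∧ δ < (⨅ i, q i) ∧ ∃ N : ℕ, ∀ n ≥ N,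
      (∀ α : ℝ, 1 ≤ α →
        renyi α (kron p (qBext (fun i => q i - δ) n)) <
          renyi α (qAB q (fun i => q i - δ) n)) ∧
      renyiInf (kron p (qBext (fun i => q i - δ) n)) <
        renyiInf (qAB q (fun i => q i - δ) n) := by
  classical
  obtain ⟨hp0, hp1⟩ := hp
  obtain ⟨hq0, hq1⟩ := hq
  rcases Nat.eq_zero_or_pos m with rfl | hm0
  · exact absurd hq1 (by simp)
  haveI : Nonempty (Fin m) := ⟨⟨0, hm0⟩⟩
  have hmR : (0:ℝ) < m := by exact_mod_cast hm0
  have hm1R : (1:ℝ) ≤ m := by exact_mod_cast hm0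
  have hqpos : ∀ i, 0 < q i := fun i => lt_of_le_of_ne (hq0 i) (Ne.symm (hq_rank i))
  have hqle1 : ∀ i, q i ≤ 1 := fun i => by
    rw [← hq1]
    exact Finset.single_le_sum (fun j _ => hq0 j) (Finset.mem_univ i)
  -- Gibbs' inequality : H(q) ≤ log m
  have gibbs : shannonEntropy q ≤ Real.log m := by
    have key : ∀ i ∈ (Finset.univ : Finset (Fin m)),
        q i * (-Real.log ↑m) + (q i - 1/↑m) ≤ q i * Real.log (q i) := by
      intro i _
      have hx : (0:ℝ) < 1/(↑m * q i) := div_pos one_pos (mul_pos hmR (hqpos i))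
      have h1 := Real.log_le_sub_one_of_pos hx
      rw [one_div, Real.log_inv, Real.log_mul (ne_of_gt hmR) (hq_rank i)] at h1
      have h2 := mul_le_mul_of_nonneg_left h1 (hq0 i)
      have h3 : q i * ((↑m * q i)⁻¹ - 1) = 1/↑m - q i := by
        field_simp [hq_rank i]
      rw [h3] at h2
      have e : q i * -(Real.log ↑m + Real.log (q i))
          = q i * (-Real.log ↑m) - q i * Real.log (q i) := by ring
      rw [e] at h2
      linarith
    have hsum := Finset.sum_le_sum key
    rw [Finset.sum_add_distrib, ← Finset.sum_mul, hq1, Finset.sum_sub_distrib, hq1,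
      Finset.sum_const, Finset.card_univ, Fintype.card_fin, nsmul_eq_mul] at hsum
    have hmm : (m:ℝ) * (1/↑m) = 1 := by field_simp
    rw [hmm] at hsum
    unfold shannonEntropy
    linarith only [hsum]
  have hHp : shannonEntropy p < Real.log m := lt_of_lt_of_le hH gibbs
  set c₀ := Real.log ↑m - shannonEntropy p with hc₀def
  have hc₀ : 0 < c₀ := by rw [hc₀def]; linarith
  have hc₀def' : c₀ = Real.log ↑m + ∑ i, p i * Real.log (p i) := by
    rw [hc₀def]; unfold shannonEntropy; ring
  -- max entry of p
  obtain ⟨ip, -, hip⟩ := Finset.exists_max_image Finset.univ p Finset.univ_nonempty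
  set P := p ip with hPdef
  have hPub : ∀ i, p i ≤ P := fun i => hip i (Finset.mem_univ i)
  have hPg : 1/(m:ℝ) < P := by
    by_contra hcon
    push_neg at hcon
    have hall : ∀ i, p i ≤ 1/(m:ℝ) := fun i => le_trans (hPub i) hcon
    have hzero : ∀ i ∈ (Finset.univ : Finset (Fin m)), (1/(m:ℝ) - p i) = 0 := by
      apply (Finset.sum_eq_zero_iff_of_nonneg (fun i _ => by linarith [hall i])).1
      rw [Finset.sum_sub_distrib, hp1, Finset.sum_const, Finset.card_univ, Fintype.card_fin,
        nsmul_eq_mul]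
      field_simp
      norm_num
    have hpu : ∀ i, p i = 1/(m:ℝ) := fun i => by
      have := hzero i (Finset.mem_univ i); linarith
    have hup : shannonEntropy p = Real.log ↑m := by
      unfold shannonEntropy
      rw [Finset.sum_congr rfl (fun i (_ : i ∈ Finset.univ) => by rw [hpu i])]
      rw [Finset.sum_const, Finset.card_univ, Fintype.card_fin, nsmul_eq_mul, one_div,
        Real.log_inv]
      field_simp
    linarith
  have hmP : 1 < ↑m*P := by
    have h := (div_lt_iff₀ hmR).1 hPg
    linarith
  -- continuity of the two auxiliary functions at 0
  have hlin : ContinuousAt (fun x : ℝ => 1 - ↑m*x) 0 :=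
    (continuous_const.sub (continuous_const.mul continuous_id)).continuousAt
  have hcont1 : ContinuousAt (fun x : ℝ => (1-↑m*x)*Real.log (1-↑m*x)) 0 := by
    apply ContinuousAt.mul hlin
    exact ContinuousAt.comp (x := (0:ℝ)) (g := Real.log) (f := fun x : ℝ => 1 - ↑m*x)
      (Real.continuousAt_log (by norm_num)) hlin
  have hcont2 : ContinuousAt (fun x : ℝ => ∑ i, (q i - x)*Real.log (q i - x)) 0 := by
    apply tendsto_finset_sum
    intro i _
    have hqi : ContinuousAt (fun x : ℝ => q i - x) 0 :=
      (continuous_const.sub continuous_id).continuousAt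
    have hlog : ContinuousAt (fun x : ℝ => Real.log (q i - x)) 0 := by
      have h := (Real.continuousAt_log
        (by simpa using (hqpos i).ne' : q i - 0 ≠ 0)).comp hqi
      exact h
    exact hqi.mul hlog
  set Df : ℝ → ℝ := fun x => ↑m*x*Real.log ↑m + (1-↑m*x)*Real.log (1-↑m*x)
      - (∑ i, (q i - x)*Real.log (q i - x)) - shannonEntropy p with hDfdef
  set Ef : ℝ → ℝ := fun x => (∑ i, (q i - x)*Real.log (q i - x))
      - (1-↑m*x)*(∑ i, p i * Real.log (p i)) - (1-↑m*x)*Real.log (1-↑m*x) with hEfdef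
  have hDfc : ContinuousAt Df 0 :=
    ((((continuous_const.mul continuous_id).mul continuous_const).continuousAt.add
      hcont1).sub hcont2).sub continuousAt_const
  have hEfc : ContinuousAt Ef 0 :=
    (hcont2.sub (hlin.mul continuousAt_const)).sub hcont1
  have hDf0 : 0 < Df 0 := by
    have e : Df 0 = shannonEntropy q - shannonEntropy p := by
      simp only [hDfdef, mul_zero, zero_mul, sub_zero, Real.log_one, one_mul, zero_add,
        mul_one]
      unfold shannonEntropy
      ring
    rw [e]
    linarith
  have hEf0 : Ef 0 < 0 := by
    have e : Ef 0 = shannonEntropy p - shannonEntropy q := by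
      simp only [hEfdef, mul_zero, zero_mul, sub_zero, Real.log_one, one_mul, zero_add,
        mul_one]
      unfold shannonEntropy
      ring
    rw [e]
    linarith
  have hev : ∀ᶠ x in nhds (0:ℝ), 0 < Df x ∧ Ef x < 0 :=
    (hDfc.eventually (eventually_gt_nhds hDf0)).and
      (hEfc.eventually (eventually_lt_nhds hEf0))
  obtain ⟨ρ, hρ, hball⟩ := Metric.eventually_nhds_iff.1 hev
  obtain ⟨i₀, -, hi₀⟩ := Finset.exists_min_image Finset.univ q Finset.univ_nonempty
  have hinf : (⨅ i, q i) = q i₀ :=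
    le_antisymm (ciInf_le (Finite.bddBelow_range q) i₀)
      (le_ciInf fun j => hi₀ j (Finset.mem_univ j))
  set δ := min (ρ/2) (q i₀/2) with hδdef
  have hδ0 : 0 < δ := lt_min (by linarith) (by linarith [hqpos i₀])
  have hδρ : δ < ρ := lt_of_le_of_lt (min_le_left _ _) (by linarith)
  have hδi₀ : δ < q i₀ := lt_of_le_of_lt (min_le_right _ _) (by linarith [hqpos i₀])
  obtain ⟨hD, hE⟩ := hball (show dist δ (0:ℝ) < ρ by
    rw [Real.dist_eq, sub_zero, abs_of_pos hδ0]; exact hδρ)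
  simp only [hDfdef] at hD
  simp only [hEfdef] at hE
  have hqδ : ∀ i, 0 < q i - δ := fun i => by
    have := hi₀ i (Finset.mem_univ i); linarith
  have hδ1 : δ ≤ 1 := le_of_lt (lt_of_lt_of_le hδi₀ (hqle1 i₀))
  have hqδ1 : ∀ i, q i - δ ≤ 1 := fun i => by linarith [hqle1 i, hδ0]
  have hSq : ∑ i, (q i - δ) = 1 - ↑m*δ := by
    rw [Finset.sum_sub_distrib, hq1, Finset.sum_const, Finset.card_univ, Fintype.card_fin,
      nsmul_eq_mul]
  have hmδ : 0 < 1 - ↑m*δ := by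
    rw [← hSq]
    exact Finset.sum_pos (fun i _ => hqδ i) Finset.univ_nonempty
  -- constants
  set K := ∑ i, (q i - δ)*(Real.log (q i - δ))^2 with hKdef
  have hK0 : 0 ≤ K := Finset.sum_nonneg fun i _ => mul_nonneg (hqδ i).le (sq_nonneg _)
  set Lg := ∑ i, |Real.log (q i - δ)| with hLgdef
  have hLg0 : 0 ≤ Lg := Finset.sum_nonneg fun i _ => abs_nonneg _
  have hnum : 0 < ↑m*(δ*δ)*c₀ := mul_pos (mul_pos hmR (mul_pos hδ0 hδ0)) hc₀
  set ε := min 1 (min (1/(1+Lg)) (↑m*(δ*δ)*c₀/(2*K+1))) with hεdef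
  have hε : 0 < ε := lt_min one_pos (lt_min (div_pos one_pos (by linarith))
    (div_pos hnum (by linarith)))
  have hε1 : ε ≤ 1 := min_le_left _ _
  have hεΛ : ∀ i, ε * |Real.log (q i - δ)| ≤ 1 := by
    intro i
    have h1 : |Real.log (q i - δ)| ≤ Lg :=
      Finset.single_le_sum (fun j (_ : j ∈ Finset.univ) => abs_nonneg (Real.log (q j - δ)))
        (Finset.mem_univ i)
    have h2 : ε ≤ 1/(1+Lg) := le_trans (min_le_right _ _) (min_le_left _ _)
    have h3 : ε * |Real.log (q i - δ)| ≤ (1/(1+Lg))*(1+Lg) :=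
      mul_le_mul h2 (by linarith) (abs_nonneg _) (le_of_lt (div_pos one_pos (by linarith)))
    rw [one_div, inv_mul_cancel₀ (by linarith : (1:ℝ)+Lg ≠ 0)] at h3
    exact h3
  have hεK : K*ε < ↑m*(δ*δ)*c₀ := by
    have h2 : ε ≤ (↑m*(δ*δ)*c₀)/(2*K+1) := le_trans (min_le_right _ _) (min_le_right _ _)
    have h3 : K*ε ≤ K*((↑m*(δ*δ)*c₀)/(2*K+1)) := mul_le_mul_of_nonneg_left h2 hK0
    have h2K : (0:ℝ) < 2*K+1 := by linarith
    have h4 : K*((↑m*(δ*δ)*c₀)/(2*K+1)) < ↑m*(δ*δ)*c₀ := by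
      rw [mul_div_assoc', div_lt_iff₀ h2K]
      have h5 : 0 < ↑m*(δ*δ)*c₀*(K+1) := mul_pos hnum (by linarith only [hK0])
      linarith only [h5]
    exact lt_of_le_of_lt h3 h4
  set α₀ := 2 + Real.log (2*↑m) / Real.log (↑m*P) with hα₀def
  have hlogmP : 0 < Real.log (↑m*P) := Real.log_pos hmP
  have hlog2m : 0 < Real.log (2*↑m) := Real.log_pos (by linarith)
  have hα₀2 : 2 ≤ α₀ := le_add_of_nonneg_right (div_nonneg hlog2m.le hlogmP.le)
  have h2m : 2*↑m < (↑m*P)^α₀ := by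
    have hmP0 : (0:ℝ) < ↑m*P := by linarith
    rw [Real.rpow_def_of_pos hmP0]
    have he : Real.log (↑m*P) * α₀ = 2*Real.log (↑m*P) + Real.log (2*↑m) := by
      rw [hα₀def]
      field_simp
    rw [he]
    calc 2*↑m = Real.exp (Real.log (2*↑m)) := (Real.exp_log (by linarith)).symm
      _ < Real.exp (2*Real.log (↑m*P) + Real.log (2*↑m)) := Real.exp_lt_exp.2 (by linarith)
  set W₁ := 1/(δ^α₀*c₀*ε) with hW₁def
  have hW₁0 : 0 ≤ W₁ :=
    le_of_lt (div_pos one_pos (mul_pos (mul_pos (Real.rpow_pos_of_pos hδ0 α₀) hc₀) hε))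
  set Nr : ℝ := max (max 1 (1/δ)) (max ((2/δ)*(2/δ)) ((W₁+1)^(1/ε))) with hNrdef
  refine ⟨δ, hδ0, by rw [hinf]; exact hδi₀, ⌈Nr⌉₊ + 1, ?_⟩
  intro n hn
  have hnR : Nr ≤ (n:ℝ) := by
    have h1 : Nr ≤ (⌈Nr⌉₊:ℝ) := Nat.le_ceil Nr
    have h2 : ((⌈Nr⌉₊ + 1 : ℕ):ℝ) ≤ (n:ℝ) := by exact_mod_cast hn
    push_cast at h2
    linarith
  have hν1 : (1:ℝ) ≤ (n:ℝ) :=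
    le_trans (le_trans (le_max_left _ _) (le_max_left _ _)) hnR
  have hνδ : 1/δ ≤ (n:ℝ) :=
    le_trans (le_trans (le_max_right _ _) (le_max_left _ _)) hnR
  have hν4 : (2/δ)*(2/δ) ≤ (n:ℝ) :=
    le_trans (le_trans (le_max_left _ _) (le_max_right _ _)) hnR
  have hνW : (W₁+1)^(1/ε) ≤ (n:ℝ) :=
    le_trans (le_trans (le_max_right _ _) (le_max_right _ _)) hnR
  have hν0 : (0:ℝ) < (n:ℝ) := by linarith
  have hn0' : ((n:ℝ)) ≠ 0 := ne_of_gt hν0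
  have hνε : 1/(δ^α₀*c₀*ε) + 1 ≤ (n:ℝ)^ε := by
    have hW10 : (0:ℝ) ≤ W₁ + 1 := by linarith
    calc W₁+1 = ((W₁+1)^(1/ε))^ε := by
          rw [one_div, Real.rpow_inv_rpow hW10 (ne_of_gt hε)]
      _ ≤ (n:ℝ)^ε := Real.rpow_le_rpow (Real.rpow_nonneg hW10 _) hνW hε.le
  -- structure of qBext and qAB
  have hqBeq : qBext (fun i => q i - δ) n
      = fun j : Fin (n+1) => if j = 0 then ↑m*δ else (1-↑m*δ)/↑n := by
    funext j
    simp only [qBext, hSq]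
    split_ifs <;> ring
  have hqABeq : qAB q (fun i => q i - δ) n
      = fun x : Fin m × Fin (n+1) => if x.2 = 0 then δ else (q x.1 - δ)/↑n := by
    funext x
    simp only [qAB]
    split_ifs <;> ring
  have hqB0 : ∀ j, 0 ≤ qBext (fun i => q i - δ) n j := by
    intro j
    rw [hqBeq]
    dsimp only
    split_ifs
    · exact mul_nonneg (Nat.cast_nonneg m) hδ0.le
    · exact div_nonneg hmδ.le (Nat.cast_nonneg n)
  constructor
  · -- Rényi entropies, α ≥ 1
    intro α hα1
    rcases eq_or_lt_of_le hα1 with heq | hα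
    · -- Shannon case α = 1
      rw [← heq]
      unfold renyi
      rw [if_pos rfl, if_pos rfl]
      have hqBsum : ∑ j, qBext (fun i => q i - δ) n j = 1 := by
        rw [hqBeq, sum_if_const]
        field_simp
        ring
      have hkS := shannon_kron p (qBext (fun i => q i - δ) n) hp0 hqB0
      have hHqB : shannonEntropy (qBext (fun i => q i - δ) n)
          = -( ↑m*δ*Real.log (↑m*δ) + (1-↑m*δ)*(Real.log (1-↑m*δ) - Real.log ↑n)) := by
        unfold shannonEntropy
        simp only [hqBeq]
        rw [sum_mullog_if_const]
        have e : ↑n*((1-↑m*δ)/↑n*Real.log ((1-↑m*δ)/↑n))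
            = (1-↑m*δ)*(Real.log (1-↑m*δ) - Real.log ↑n) := by
          rw [Real.log_div (ne_of_gt hmδ) hn0']
          field_simp
        rw [e]
      have hHqAB : shannonEntropy (qAB q (fun i => q i - δ) n)
          = -( ↑m*(δ*Real.log δ) + ((∑ i, (q i - δ)*Real.log (q i - δ))
              - (1-↑m*δ)*Real.log ↑n)) := by
        unfold shannonEntropy
        simp only [hqABeq, Fintype.sum_prod_type, sum_mullog_if_const]
        rw [Finset.sum_add_distrib, Finset.sum_const, Finset.card_univ, Fintype.card_fin,
          nsmul_eq_mul]
        have e2 : ∀ i ∈ (Finset.univ : Finset (Fin m)),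
            ↑n*((q i - δ)/↑n * Real.log ((q i - δ)/↑n))
            = (q i - δ)*Real.log (q i - δ) - (q i - δ)*Real.log ↑n := by
          intro i _
          rw [Real.log_div (ne_of_gt (hqδ i)) hn0']
          field_simp
        rw [Finset.sum_congr rfl e2, Finset.sum_sub_distrib, ← Finset.sum_mul, hSq]
      rw [hkS, hqBsum, hp1, hHqB, hHqAB]
      have hlogmδ : Real.log (↑m*δ) = Real.log ↑m + Real.log δ :=
        Real.log_mul (ne_of_gt hmR) (ne_of_gt hδ0)
      rw [hlogmδ]
      linarith only [hD]
    · -- case α > 1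
      have hS1 : ∑ x, (kron p (qBext (fun i => q i - δ) n) x)^α
          = (∑ i, p i^α) * ((↑m*δ)^α + (↑n)^((1:ℝ)-α)*(1-↑m*δ)^α) := by
        rw [sum_rpow_kron p _ hp0 hqB0]
        congr 1
        simp only [hqBeq]
        rw [sum_rpow_if_const]
        congr 1
        rw [Real.div_rpow hmδ.le (Nat.cast_nonneg n), Real.rpow_sub hν0, Real.rpow_one]
        ring
      have hS2 : ∑ x, (qAB q (fun i => q i - δ) n x)^α
          = ↑m*δ^α + (↑n)^((1:ℝ)-α)*(∑ i, (q i - δ)^α) := by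
        simp only [hqABeq, Fintype.sum_prod_type, sum_rpow_if_const]
        rw [Finset.sum_add_distrib, Finset.sum_const, Finset.card_univ, Fintype.card_fin,
          nsmul_eq_mul]
        congr 1
        rw [Finset.mul_sum]
        apply Finset.sum_congr rfl
        intro i _
        rw [Real.div_rpow (hqδ i).le (Nat.cast_nonneg n), Real.rpow_sub hν0, Real.rpow_one]
        ring
      have hcore := core_lemma p q δ ε c₀ K P α₀ (↑n) hm1R hp0 hp1 hc₀def' hc₀ hqδ hqδ1
        hSq hδ0 hδ1 hKdef hεΛ hE hε hε1 hεK hPub ⟨ip, rfl⟩ hmP hα₀2 h2m hν1 hν4 hνε hα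
      have hS2pos : 0 < ∑ x, (qAB q (fun i => q i - δ) n x)^α := by
        rw [hS2]
        have h1 : 0 < ↑m*δ^α := mul_pos hmR (Real.rpow_pos_of_pos hδ0 α)
        have h2 : 0 ≤ (↑n:ℝ)^((1:ℝ)-α)*(∑ i, (q i - δ)^α) :=
          mul_nonneg (Real.rpow_nonneg hν0.le _)
            (Finset.sum_nonneg fun i _ => (Real.rpow_pos_of_pos (hqδ i) α).le)
        linarith
      have hSlt : ∑ x, (qAB q (fun i => q i - δ) n x)^α
          < ∑ x, (kron p (qBext (fun i => q i - δ) n) x)^α := by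
        rw [hS1, hS2]
        exact hcore
      unfold renyi
      rw [if_neg (ne_of_gt hα), if_neg (ne_of_gt hα),
        Real.sign_of_pos (by linarith : (0:ℝ) < α)]
      have hc : 1/(1-α) < 0 := div_neg_of_pos_of_neg one_pos (by linarith)
      have hlog := Real.log_lt_log hS2pos hSlt
      exact mul_lt_mul_of_neg_left hlog hc
  · -- min entropy
    have hub : ∀ x : Fin m × Fin (n+1), qAB q (fun i => q i - δ) n x ≤ δ := by
      intro x
      rw [hqABeq]
      dsimp only
      split_ifs
      · exact le_refl δ
      · have h1 : q x.1 - δ ≤ 1 := hqδ1 x.1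
        calc (q x.1 - δ)/↑n ≤ 1/↑n := by gcongr
          _ ≤ δ := by
              rw [div_le_iff₀ hν0]
              have h := mul_le_mul_of_nonneg_left hνδ hδ0.le
              rw [mul_one_div_cancel (ne_of_gt hδ0)] at h
              linarith only [h]
    have hsupQ_le : (⨆ x, qAB q (fun i => q i - δ) n x) ≤ δ := ciSup_le hub
    have hmem : qAB q (fun i => q i - δ) n (i₀, 0) = δ := by
      simp [hqABeq]
    have hsupQ_pos : 0 < ⨆ x, qAB q (fun i => q i - δ) n x := by
      have hle2 := le_ciSup (Set.Finite.bddAbove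
        (Set.finite_range (qAB q (fun i => q i - δ) n))) ((i₀, 0) : Fin m × Fin (n+1))
      rw [hmem] at hle2
      linarith
    have hval : kron p (qBext (fun i => q i - δ) n) (ip, 0) = P*(↑m*δ) := by
      simp [kron, hqBeq, hPdef]
    have hsupK_ge : P*(↑m*δ) ≤ ⨆ x, kron p (qBext (fun i => q i - δ) n) x := by
      rw [← hval]
      exact le_ciSup (Set.Finite.bddAbove (Set.finite_range _)) ((ip, 0) :
        Fin m × Fin (n+1))
    have hPδ : δ < P*(↑m*δ) := by
      have e : P*(↑m*δ) = (↑m*P)*δ := by ring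
      rw [e]
      have h := mul_lt_mul_of_pos_right hmP hδ0
      rw [one_mul] at h
      exact h
    unfold renyiInf
    apply neg_lt_neg
    apply Real.log_lt_log hsupQ_pos
    calc (⨆ x, qAB q (fun i => q i - δ) n x) ≤ δ := hsupQ_le
      _ < P*(↑m*δ) := hPδ
      _ ≤ ⨆ x, kron p (qBext (fun i => q i - δ) n) x := hsupK_ge
end

section
/- Let p ∈ ℝ^m be a probability distribution with full rank (all entries strictly positive). Then H_Burg(p) + log m = lim_{α→0⁺} ((1−α)/α)·(H_α(p) − log m) and H_Burg(p) + log m = lim_{α→0⁻} ((1−α)/α)·(−H_α(p) − log m). -/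
open scoped BigOperators

open Filter Set in
open scoped Topology in
private theorem burg_limit_aux {m : ℕ} (p : Fin m → ℝ) (hp : (∀ i, 0 ≤ p i) ∧ ∑ i, p i = 1)
    (hfull : ∀ i, p i ≠ 0) (renyi : ℝ → (Fin m → ℝ) → ℝ)
    (hren : ∀ α, α ≠ 1 → renyi α p = (Real.sign α / (1 - α)) * Real.log (∑ i, p i ^ α))
    (burg : ℝ)
    (hburg : burg = (1 / (m : ℝ)) * ∑ i, Real.log (p i)) :
    Filter.Tendsto (fun α : ℝ => ((1 - α) / α) * (renyi α p - Real.log m))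
      (nhdsWithin 0 (Set.Ioi 0)) (nhds (burg + Real.log m)) ∧
    Filter.Tendsto (fun α : ℝ => ((1 - α) / α) * (-renyi α p - Real.log m))
      (nhdsWithin 0 (Set.Iio 0)) (nhds (burg + Real.log m)) := by
  classical
  have hm : 0 < m := by
    rcases Nat.eq_zero_or_pos m with h | h
    · subst h; simpa using hp.2
    · exact h
  have hm' : (0:ℝ) < m := by exact_mod_cast hm
  have hpos : ∀ i, 0 < p i := fun i => lt_of_le_of_ne (hp.1 i) (Ne.symm (hfull i))
  set g : ℝ → ℝ := fun α => Real.log (∑ i, p i ^ α) with hgdef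
  have hS : HasDerivAt (fun α : ℝ => ∑ i, p i ^ α) (∑ i, Real.log (p i)) (0:ℝ) := by
    have h := HasDerivAt.fun_sum (u := Finset.univ)
      (fun i _ => (Real.hasStrictDerivAt_const_rpow (hpos i) 0).hasDerivAt)
    simpa using h
  have hS0 : (∑ i : Fin m, p i ^ (0:ℝ)) = (m : ℝ) := by simp
  have hg : HasDerivAt g burg 0 := by
    have := hS.log (by rw [hS0]; positivity)
    rw [hS0] at this
    rwa [hburg, one_div, inv_mul_eq_div]
  have hg0 : g 0 = Real.log m := by rw [hgdef]; simp
  have hslope : Tendsto (fun α => (g α - Real.log m) / α + Real.log m) (𝓝[≠] (0:ℝ))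
      (𝓝 (burg + Real.log m)) := by
    have h := hasDerivAt_iff_tendsto_slope.mp hg
    have h2 : Tendsto (fun α => (g α - Real.log m) / α) (𝓝[≠] (0:ℝ)) (𝓝 burg) := by
      refine h.congr fun α => ?_
      rw [slope_def_field, hg0, sub_zero]
    exact h2.add_const _
  constructor
  · have h1 : Tendsto (fun α => (g α - Real.log m) / α + Real.log m) (𝓝[>] (0:ℝ))
        (𝓝 (burg + Real.log m)) := hslope.mono_left (nhdsWithin_mono _ fun x hx => ne_of_gt hx)
    refine h1.congr' ?_
    filter_upwards [Ioo_mem_nhdsGT_of_mem (by constructor <;> norm_num : (0:ℝ) ∈ Ico 0 1)]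
      with α hα
    have hα0 : α ≠ 0 := ne_of_gt hα.1
    have hα1 : (1:ℝ) - α ≠ 0 := by have := hα.2; intro h; linarith
    rw [hren α (by intro h; rw [h] at hα; exact lt_irrefl _ hα.2),
        Real.sign_of_pos hα.1, show Real.log (∑ i, p i ^ α) = g α from rfl]
    field_simp
    ring
  · have h1 : Tendsto (fun α => (g α - Real.log m) / α + Real.log m) (𝓝[<] (0:ℝ))
        (𝓝 (burg + Real.log m)) := hslope.mono_left (nhdsWithin_mono _ fun x hx => ne_of_lt hx)
    refine h1.congr' ?_
    filter_upwards [self_mem_nhdsWithin] with α (hα : α < 0)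
    have hα0 : α ≠ 0 := ne_of_lt hα
    have hα1 : (1:ℝ) - α ≠ 0 := by intro h; linarith
    rw [hren α (by intro h; rw [h] at hα; linarith), Real.sign_of_neg hα, show Real.log (∑ i, p i ^ α) = g α from rfl]
    field_simp
    ring


/-- For a full-rank probability distribution `p ∈ ℝ^m`:
`H_Burg(p) + log m = lim_{α→0⁺} ((1-α)/α)(H_α(p) - log m)
               = lim_{α→0⁻} ((1-α)/α)(-H_α(p) - log m)`. -/
theorem burg_limit {m : ℕ} (p : Fin m → ℝ) (hp : IsProbDist p)
    (hfull : ∀ i, p i ≠ 0) :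
    Filter.Tendsto (fun α : ℝ => ((1 - α) / α) * (renyi α p - Real.log m))
      (nhdsWithin 0 (Set.Ioi 0)) (nhds (burg p + Real.log m)) ∧
    Filter.Tendsto (fun α : ℝ => ((1 - α) / α) * (-renyi α p - Real.log m))
      (nhdsWithin 0 (Set.Iio 0)) (nhds (burg p + Real.log m)) := by
  exact burg_limit_aux p hp hfull (fun α q => renyi α q)
    (fun α hα => by simp only [renyi, if_neg hα])
    (burg p) (by rw [burg, Fintype.card_fin])
end

section
/- Let p, q ∈ ℝ^m be probability distributions with q of full rank and q ≠ (1/m,…,1/m), let δ ∈ (0, min_i q_i), and fix a real α ∈ (1,∞). For real n ≥ 1 define Δ_n^{(α)} := (1/(1−α)) · log [ (m δ^α + n^{1−α} ∑_{i=1}^m (q_i − δ)^α) / ( (∑_{i=1}^m p_i^α) · (m^α δ^α + (1 − mδ)^α n^{1−α}) ) ]. Then n ↦ Δ_n^{(α)} is strictly increasing on [1,∞). -/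
open scoped BigOperators

/-- With `q` full rank and non-uniform, `δ ∈ (0, min_i q_i)` and fixed
`α > 1`, the quantity `Δ_n^{(α)}` is strictly increasing in real `n ∈ [1, ∞)`. -/
theorem delta_strict_mono {m : ℕ} (p q : Fin m → ℝ)
    (hp : IsProbDist p) (hq : IsProbDist q)
    (hq_rank : ∀ i, q i ≠ 0) (hq_ne : q ≠ fun _ => 1 / (m : ℝ))
    (δ : ℝ) (hδ0 : 0 < δ) (hδ : δ < ⨅ i, q i) (α : ℝ) (hα : 1 < α) :
    StrictMonoOn (fun n : ℝ => (1 / (1 - α)) * Real.log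
      (((m : ℝ) * δ ^ α + n ^ (1 - α) * ∑ i, (q i - δ) ^ α) /
        ((∑ i, p i ^ α) *
          ((m : ℝ) ^ α * δ ^ α + (1 - (m : ℝ) * δ) ^ α * n ^ (1 - α)))))
      (Set.Ici 1) := by
    -- `m` is positive, since otherwise `⨅ i, q i = 0` contradicts `0 < δ`.
  have hm : 0 < m := by
    rcases Nat.eq_zero_or_pos m with h | h
    · subst h
      rw [iInf_of_isEmpty, Real.sInf_empty] at hδ
      linarith
    · exact h
  haveI : Nonempty (Fin m) := ⟨⟨0, hm⟩⟩
  have hδq : ∀ i, δ < q i := fun i =>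
    lt_of_lt_of_le hδ (ciInf_le (Set.Finite.bddBelow (Set.finite_range q)) i)
  have hqδpos : ∀ i, 0 < q i - δ := fun i => sub_pos.2 (hδq i)
  -- positivity of the various constants
  have hα0 : (0:ℝ) < α := by linarith
  have hA : (0:ℝ) < (m:ℝ) * δ ^ α := by positivity
  have hB : (0:ℝ) < ∑ i, (q i - δ) ^ α :=
    Finset.sum_pos (fun i _ => Real.rpow_pos_of_pos (hqδpos i) α) Finset.univ_nonempty
  have hpexists : ∃ i, 0 < p i := by
    by_contra h
    push_neg at h
    have : ∑ i, p i = 0 := Finset.sum_eq_zero fun i _ => le_antisymm (h i) (hp.1 i)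
    rw [hp.2] at this; norm_num at this
  obtain ⟨i₀, hi₀⟩ := hpexists
  have hC : (0:ℝ) < ∑ i, p i ^ α := by
    apply Finset.sum_pos' (fun i _ => Real.rpow_nonneg (hp.1 i) α)
    exact ⟨i₀, Finset.mem_univ i₀, Real.rpow_pos_of_pos hi₀ α⟩
  have hsum : ∑ i, (q i - δ) = 1 - (m:ℝ) * δ := by
    rw [Finset.sum_sub_distrib, hq.2, Finset.sum_const, Finset.card_univ, Fintype.card_fin]
    ring
  have hmδ : (0:ℝ) < 1 - (m:ℝ) * δ := by
    rw [← hsum]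
    exact Finset.sum_pos (fun i _ => hqδpos i) Finset.univ_nonempty
  have hD : (0:ℝ) < (m:ℝ) ^ α * δ ^ α := by positivity
  have hE : (0:ℝ) < (1 - (m:ℝ) * δ) ^ α := by positivity
  -- the key inequality from strict Jensen: A * E < B * D
  have hne : ∃ j ∈ Finset.univ, ∃ k ∈ (Finset.univ : Finset (Fin m)), q j - δ ≠ q k - δ := by
    by_contra h
    push_neg at h
    apply hq_ne
    have hconst : ∀ j k, q j = q k := fun j k => by
      have := h j (Finset.mem_univ j) k (Finset.mem_univ k)
      linarith
    have i₁ : Fin m := ⟨0, hm⟩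
    have hsum1 : (m:ℝ) * q i₁ = 1 := by
      rw [← hq.2]
      rw [Finset.sum_congr rfl fun j _ => hconst j i₁, Finset.sum_const, Finset.card_univ,
        Fintype.card_fin, nsmul_eq_mul]
    funext j
    rw [hconst j i₁, eq_div_iff (by positivity : (m:ℝ) ≠ 0), mul_comm, hsum1]
  have hjensen := (strictConvexOn_rpow hα).map_sum_lt
    (w := fun _ : Fin m => 1 / (m:ℝ)) (p := fun i => q i - δ) (t := Finset.univ)
    (fun i _ => by positivity)
    (by rw [Finset.sum_const, Finset.card_univ, Fintype.card_fin, nsmul_eq_mul]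
        field_simp)
    (fun i _ => le_of_lt (hqδpos i)) hne
  simp only [smul_eq_mul] at hjensen
  have hsum2 : ∑ i, (1 / (m:ℝ)) * (q i - δ) = (1 - (m:ℝ) * δ) / (m:ℝ) := by
    rw [← Finset.mul_sum, hsum]; ring
  rw [hsum2, ← Finset.mul_sum] at hjensen
  -- hjensen : ((1 - m δ)/m) ^ α < (1/m) * B
  have hkey : (m:ℝ) * δ ^ α * (1 - (m:ℝ) * δ) ^ α <
      (∑ i, (q i - δ) ^ α) * ((m:ℝ) ^ α * δ ^ α) := by
    have hEeq : (1 - (m:ℝ) * δ) ^ α = ((1 - (m:ℝ) * δ) / (m:ℝ)) ^ α * (m:ℝ) ^ α := by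
      rw [← Real.mul_rpow (by positivity) (by positivity)]
      congr 1
      field_simp
    rw [hEeq]
    have hmpow : (0:ℝ) < (m:ℝ) ^ α := by positivity
    have h1 : ((1 - (m:ℝ) * δ) / (m:ℝ)) ^ α * (m:ℝ) <
        ∑ i, (q i - δ) ^ α := by
      have := mul_lt_mul_of_pos_right hjensen (by positivity : (0:ℝ) < (m:ℝ))
      calc ((1 - (m:ℝ) * δ) / (m:ℝ)) ^ α * (m:ℝ)
          < 1 / (m:ℝ) * (∑ i, (q i - δ) ^ α) * (m:ℝ) := this
        _ = ∑ i, (q i - δ) ^ α := by field_simp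
    have hδα : (0:ℝ) < δ ^ α := by positivity
    nlinarith [mul_pos hδα hmpow]
  -- now the monotonicity
  intro x hx y hy hxy
  have hx0 : (0:ℝ) < x := lt_of_lt_of_le one_pos hx
  have hy0 : (0:ℝ) < y := lt_of_lt_of_le one_pos hy
  set s := x ^ (1 - α) with hs
  set t := y ^ (1 - α) with ht
  have hts : t < s := Real.rpow_lt_rpow_of_neg hx0 hxy (by linarith)
  have ht0 : (0:ℝ) < t := Real.rpow_pos_of_pos hy0 _
  have hs0 : (0:ℝ) < s := Real.rpow_pos_of_pos hx0 _
  simp only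
  set A := (m:ℝ) * δ ^ α
  set B := ∑ i, (q i - δ) ^ α
  set C := ∑ i, p i ^ α
  set D := (m:ℝ) ^ α * δ ^ α
  set E := (1 - (m:ℝ) * δ) ^ α
  have hdenx : (0:ℝ) < C * (D + E * s) := by positivity
  have hdeny : (0:ℝ) < C * (D + E * t) := by positivity
  have hratio : (A + t * B) / (C * (D + E * t)) < (A + s * B) / (C * (D + E * s)) := by
    rw [div_lt_div_iff₀ hdeny hdenx]
    nlinarith [mul_pos (mul_pos hC (sub_pos.2 hts)) (sub_pos.2 hkey)]
  have hlog : Real.log ((A + t * B) / (C * (D + E * t))) <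
      Real.log ((A + s * B) / (C * (D + E * s))) :=
    Real.log_lt_log (by positivity) hratio
  have hc : 1 / (1 - α) < 0 := by
    apply div_neg_of_pos_of_neg one_pos; linarith
  exact mul_lt_mul_of_neg_left hlog hc
end

section
/- Let p, q ∈ ℝ^m be probability distributions with q of full rank, let a ∈ (0, m·min_i q_i), set a_i := a/m, and let q_{AB} be the corresponding bipartite extension of q with parameter n ∈ ℕ. Define Δ̃_n^{(α)} := H_α(q_{AB}) − H_α(q_B) − H_α(p) (for α < 0 assume additionally that p has full rank). Then, as a function of n ∈ ℕ: Δ̃_n^{(α)} is increasing in n for every finite real α < 1 with α ≠ 0; Δ̃_n^{(α)} is constant in n for α = 1; and Δ̃_n^{(α)} is decreasing in n for every finite real α > 1. -/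
open scoped BigOperators

/-- The quantity `Δ̃_n^{(α)} = H_α(q_{AB}) - H_α(q_B) - H_α(p)` for `a_i := a/m`. -/
noncomputable def deltaTilde {m : ℕ} (p q : Fin m → ℝ) (a α : ℝ) (n : ℕ) : ℝ :=
  renyi α (qAB q (fun _ => a / (m : ℝ)) n) -
    renyi α (qBext (fun _ : Fin m => a / (m : ℝ)) n) - renyi α p


private lemma convexOn_rpow_neg {α : ℝ} (hα : α < 0) :
    ConvexOn ℝ (Set.Ioi (0:ℝ)) fun x : ℝ => x ^ α := by
  refine ⟨convex_Ioi _, fun x hx y hy a b ha hb hab => ?_⟩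
  simp only [Set.mem_Ioi] at hx hy
  simp only [smul_eq_mul]
  have h1 : (a * x + b * y) ^ α ≤ (x ^ a * y ^ b) ^ α := by
    apply Real.rpow_le_rpow_of_nonpos (by positivity)
      (Real.geom_mean_le_arith_mean2_weighted ha hb hx.le hy.le hab) hα.le
  have h2 : (x ^ a * y ^ b) ^ α = (x ^ α) ^ a * (y ^ α) ^ b := by
    rw [Real.mul_rpow (by positivity) (by positivity),
      ← Real.rpow_mul hx.le, ← Real.rpow_mul hy.le, mul_comm a α, mul_comm b α,
      Real.rpow_mul hx.le, Real.rpow_mul hy.le]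
  calc (a * x + b * y) ^ α ≤ (x ^ α) ^ a * (y ^ α) ^ b := by rw [← h2]; exact h1
    _ ≤ a * x ^ α + b * y ^ α :=
      Real.geom_mean_le_arith_mean2_weighted ha hb (by positivity) (by positivity) hab

/-- Convex Jensen: `m * ((∑ x)/m)^α ≤ ∑ x_i^α` for `α < 0` or `1 ≤ α`. -/
private lemma jensen_ge {m : ℕ} (hm : 0 < m) (x : Fin m → ℝ) (hx : ∀ i, 0 < x i) {α : ℝ}
    (hα : α < 0 ∨ 1 ≤ α) :
    (m : ℝ) * ((∑ i, x i) / m) ^ α ≤ ∑ i, x i ^ α := by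
  have hmR : (0:ℝ) < m := by exact_mod_cast hm
  have hconv : ConvexOn ℝ (Set.Ioi (0:ℝ)) fun t : ℝ => t ^ α := by
    rcases hα with h | h
    · exact convexOn_rpow_neg h
    · exact (convexOn_rpow h).subset (Set.Ioi_subset_Ici le_rfl) (convex_Ioi 0)
  have key := hconv.map_sum_le (t := Finset.univ) (w := fun _ : Fin m => (m:ℝ)⁻¹)
    (p := x) (fun i _ => by positivity)
    (by simp [Finset.card_univ, mul_inv_cancel₀ hmR.ne'])
    (fun i _ => Set.mem_Ioi.mpr (hx i))
  simp only [smul_eq_mul, ← Finset.mul_sum] at key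
  have h1 : (m:ℝ)⁻¹ * ∑ i, x i = (∑ i, x i) / m := by ring
  rw [h1] at key
  calc (m : ℝ) * ((∑ i, x i) / m) ^ α ≤ (m:ℝ) * ((m:ℝ)⁻¹ * ∑ i, x i ^ α) :=
        by nlinarith [key]
    _ = ∑ i, x i ^ α := by field_simp

/-- Concave Jensen: `∑ x_i^α ≤ m * ((∑ x)/m)^α` for `0 ≤ α ≤ 1`. -/
private lemma jensen_le {m : ℕ} (hm : 0 < m) (x : Fin m → ℝ) (hx : ∀ i, 0 < x i) {α : ℝ}
    (hα : 0 ≤ α) (hα1 : α ≤ 1) :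
    ∑ i, x i ^ α ≤ (m : ℝ) * ((∑ i, x i) / m) ^ α := by
  have hmR : (0:ℝ) < m := by exact_mod_cast hm
  have hconc : ConcaveOn ℝ (Set.Ici (0:ℝ)) fun t : ℝ => t ^ α := Real.concaveOn_rpow hα hα1
  have key := hconc.le_map_sum (t := Finset.univ) (w := fun _ : Fin m => (m:ℝ)⁻¹)
    (p := x) (fun i _ => by positivity)
    (by simp [Finset.card_univ, mul_inv_cancel₀ hmR.ne'])
    (fun i _ => (hx i).le)
  simp only [smul_eq_mul, ← Finset.mul_sum] at key
  have h1 : (m:ℝ)⁻¹ * ∑ i, x i = (∑ i, x i) / m := by ring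
  rw [h1] at key
  calc ∑ i, x i ^ α = (m:ℝ) * ((m:ℝ)⁻¹ * ∑ i, x i ^ α) := by field_simp
    _ ≤ (m : ℝ) * ((∑ i, x i) / m) ^ α := by nlinarith [key]

/-- Core monotonicity of `t ↦ log (C + C₂ t) - log (D + D₂ t)` given the cross condition. -/
private lemma log_cross {C C2 D D2 t1 t2 : ℝ} (hC : 0 < C) (hC2 : 0 < C2) (hD : 0 < D)
    (hD2 : 0 < D2) (ht1 : 0 < t1) (ht : t1 ≤ t2) (hcross : C * D2 ≤ C2 * D) :
    Real.log (C + C2 * t1) - Real.log (D + D2 * t1) ≤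
      Real.log (C + C2 * t2) - Real.log (D + D2 * t2) := by
  have ht2 : 0 < t2 := lt_of_lt_of_le ht1 ht
  have hA1 : 0 < C + C2 * t1 := by positivity
  have hA2 : 0 < C + C2 * t2 := by positivity
  have hB1 : 0 < D + D2 * t1 := by positivity
  have hB2 : 0 < D + D2 * t2 := by positivity
  rw [sub_le_sub_iff, ← Real.log_mul hA1.ne' hB2.ne', ← Real.log_mul hA2.ne' hB1.ne']
  apply Real.log_le_log (by positivity)
  nlinarith

/-- Value of the Rényi power sum of `qAB` with constant parameter `c`. -/
private lemma sum_rpow_qAB {m : ℕ} (q : Fin m → ℝ) (c α : ℝ) (hc : 0 < c) {n : ℕ} (hn : 1 ≤ n) :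
    ∑ x : Fin m × Fin (n+1), qAB q (fun _ => c) n x ^ α
      = (∑ i, (q i - c) ^ α) + (m : ℝ) * (c ^ α * (n:ℝ) ^ (1 - α)) := by
  have hn0 : (0:ℝ) < n := by exact_mod_cast hn
  rw [Fintype.sum_prod_type]
  have hinner : ∀ i : Fin m, ∑ j : Fin (n+1), qAB q (fun _ => c) n (i, j) ^ α
      = (q i - c) ^ α + c ^ α * (n:ℝ) ^ (1-α) := by
    intro i
    rw [Fin.sum_univ_succ]
    have h0 : qAB q (fun _ => c) n (i, 0) = q i - c := by simp [qAB]
    have hs : ∀ j : Fin n, qAB q (fun _ => c) n (i, j.succ) = c / n := by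
      intro j; simp [qAB, Fin.succ_ne_zero]
    rw [h0]
    congr 1
    calc ∑ j : Fin n, qAB q (fun _ => c) n (i, j.succ) ^ α
        = ∑ _j : Fin n, (c / n) ^ α := by
          exact Finset.sum_congr rfl fun j _ => by rw [hs j]
      _ = (n:ℝ) * (c / n) ^ α := by
          rw [Finset.sum_const, Finset.card_univ, Fintype.card_fin, nsmul_eq_mul]
      _ = c ^ α * (n:ℝ) ^ (1-α) := by
          rw [Real.div_rpow hc.le hn0.le, Real.rpow_sub hn0, Real.rpow_one]
          field_simp
  rw [Finset.sum_congr rfl fun i _ => hinner i, Finset.sum_add_distrib, Finset.sum_const,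
    Finset.card_univ, Fintype.card_fin, nsmul_eq_mul]

/-- Value of the Rényi power sum of `qBext` with constant parameter `c`. -/
private lemma sum_rpow_qBext {m : ℕ} (c α : ℝ) (hc : 0 < (m:ℝ) * c) {n : ℕ} (hn : 1 ≤ n) :
    ∑ j : Fin (n+1), qBext (fun _ : Fin m => c) n j ^ α
      = (1 - (m:ℝ) * c) ^ α + ((m:ℝ) * c) ^ α * (n:ℝ) ^ (1 - α) := by
  have hn0 : (0:ℝ) < n := by exact_mod_cast hn
  have hsum : ∑ _i : Fin m, c = (m:ℝ) * c := by
    rw [Finset.sum_const, Finset.card_univ, Fintype.card_fin, nsmul_eq_mul]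
  rw [Fin.sum_univ_succ]
  have h0 : qBext (fun _ : Fin m => c) n 0 = 1 - (m:ℝ) * c := by
    simp only [qBext, if_pos rfl, hsum, if_true]
  have hs : ∀ j : Fin n, qBext (fun _ : Fin m => c) n j.succ = ((m:ℝ) * c) / n := by
    intro j; simp only [qBext, if_neg (Fin.succ_ne_zero j), hsum]
  rw [h0]
  congr 1
  calc ∑ j : Fin n, qBext (fun _ : Fin m => c) n j.succ ^ α
      = ∑ _j : Fin n, (((m:ℝ) * c) / n) ^ α :=
        Finset.sum_congr rfl fun j _ => by rw [hs j]
    _ = (n:ℝ) * (((m:ℝ) * c) / n) ^ α := by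
        rw [Finset.sum_const, Finset.card_univ, Fintype.card_fin, nsmul_eq_mul]
    _ = ((m:ℝ) * c) ^ α * (n:ℝ) ^ (1-α) := by
        rw [Real.div_rpow hc.le hn0.le, Real.rpow_sub hn0, Real.rpow_one]
        field_simp

/-- Value of the Shannon entropy of `qAB` with constant parameter `c`. -/
private lemma shannon_qAB {m : ℕ} (q : Fin m → ℝ) (c : ℝ) (hc : 0 < c) {n : ℕ} (hn : 1 ≤ n) :
    shannonEntropy (qAB q (fun _ => c) n)
      = -(∑ i, (q i - c) * Real.log (q i - c))
        - (m : ℝ) * (c * (Real.log c - Real.log n)) := by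
  have hn0 : (0:ℝ) < n := by exact_mod_cast hn
  rw [shannonEntropy, Fintype.sum_prod_type]
  have hinner : ∀ i : Fin m, ∑ j : Fin (n+1),
        qAB q (fun _ => c) n (i, j) * Real.log (qAB q (fun _ => c) n (i, j))
      = (q i - c) * Real.log (q i - c) + c * (Real.log c - Real.log n) := by
    intro i
    rw [Fin.sum_univ_succ]
    have h0 : qAB q (fun _ => c) n (i, 0) = q i - c := by simp [qAB]
    have hs : ∀ j : Fin n, qAB q (fun _ => c) n (i, j.succ) = c / n := by
      intro j; simp [qAB, Fin.succ_ne_zero]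
    rw [h0]
    congr 1
    calc ∑ j : Fin n, qAB q (fun _ => c) n (i, j.succ) * Real.log (qAB q (fun _ => c) n (i, j.succ))
        = ∑ _j : Fin n, (c / n) * Real.log (c / n) :=
          Finset.sum_congr rfl fun j _ => by rw [hs j]
      _ = (n:ℝ) * ((c / n) * Real.log (c / n)) := by
          rw [Finset.sum_const, Finset.card_univ, Fintype.card_fin, nsmul_eq_mul]
      _ = c * (Real.log c - Real.log n) := by
          rw [Real.log_div hc.ne' hn0.ne']
          field_simp
  rw [Finset.sum_congr rfl fun i _ => hinner i, Finset.sum_add_distrib, Finset.sum_const,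
    Finset.card_univ, Fintype.card_fin, nsmul_eq_mul]
  ring

/-- Value of the Shannon entropy of `qBext` with constant parameter `c`. -/
private lemma shannon_qBext {m : ℕ} (c : ℝ) (hc : 0 < (m:ℝ) * c)
    {n : ℕ} (hn : 1 ≤ n) :
    shannonEntropy (qBext (fun _ : Fin m => c) n)
      = -((1 - (m:ℝ) * c) * Real.log (1 - (m:ℝ) * c))
        - (m:ℝ) * c * (Real.log ((m:ℝ) * c) - Real.log n) := by
  have hn0 : (0:ℝ) < n := by exact_mod_cast hn
  have hsum : ∑ _i : Fin m, c = (m:ℝ) * c := by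
    rw [Finset.sum_const, Finset.card_univ, Fintype.card_fin, nsmul_eq_mul]
  rw [shannonEntropy, Fin.sum_univ_succ]
  have h0 : qBext (fun _ : Fin m => c) n 0 = 1 - (m:ℝ) * c := by
    simp only [qBext, if_pos rfl, hsum, if_true]
  have hs : ∀ j : Fin n, qBext (fun _ : Fin m => c) n j.succ = ((m:ℝ) * c) / n := by
    intro j; simp only [qBext, if_neg (Fin.succ_ne_zero j), hsum]
  rw [h0]
  have : ∑ j : Fin n, qBext (fun _ : Fin m => c) n j.succ * Real.log (qBext (fun _ : Fin m => c) n j.succ)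
      = (m:ℝ) * c * (Real.log ((m:ℝ) * c) - Real.log n) := by
    calc ∑ j : Fin n, qBext (fun _ : Fin m => c) n j.succ * Real.log (qBext (fun _ : Fin m => c) n j.succ)
        = ∑ _j : Fin n, (((m:ℝ) * c) / n) * Real.log (((m:ℝ) * c) / n) :=
          Finset.sum_congr rfl fun j _ => by rw [hs j]
      _ = (n:ℝ) * ((((m:ℝ) * c) / n) * Real.log (((m:ℝ) * c) / n)) := by
          rw [Finset.sum_const, Finset.card_univ, Fintype.card_fin, nsmul_eq_mul]
      _ = (m:ℝ) * c * (Real.log ((m:ℝ) * c) - Real.log n) := by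
          rw [Real.log_div hc.ne' hn0.ne']
          field_simp
  rw [this]
  ring

/-- Closed form of the `n`-dependent part of `deltaTilde` for `α ≠ 1`. -/
private lemma deltaTilde_eval {m : ℕ} (p q : Fin m → ℝ) (a α : ℝ)
    (hmR : (0:ℝ) < m) (hc : 0 < a / (m:ℝ)) {n : ℕ} (hn : 1 ≤ n) (hαne : α ≠ 1) :
    deltaTilde p q a α n
      = (Real.sign α / (1 - α)) *
          (Real.log ((∑ i, (q i - a/(m:ℝ)) ^ α) + ((m:ℝ) * (a/(m:ℝ)) ^ α) * (n:ℝ) ^ (1-α))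
           - Real.log ((1 - a) ^ α + a ^ α * (n:ℝ) ^ (1-α)))
        - renyi α p := by
  have hmc : (m:ℝ) * (a/(m:ℝ)) = a := by field_simp
  have hmca : 0 < (m:ℝ) * (a/(m:ℝ)) := by rw [hmc]; nlinarith
  rw [deltaTilde]
  rw [show renyi α (qAB q (fun _ => a / (m:ℝ)) n)
      = (Real.sign α / (1 - α)) * Real.log (∑ x : Fin m × Fin (n+1),
          qAB q (fun _ => a / (m:ℝ)) n x ^ α) from by
    simp only [renyi, hαne, if_false]]
  rw [show renyi α (qBext (fun _ : Fin m => a / (m:ℝ)) n)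
      = (Real.sign α / (1 - α)) * Real.log (∑ j : Fin (n+1),
          qBext (fun _ : Fin m => a / (m:ℝ)) n j ^ α) from by
    simp only [renyi, hαne, if_false]]
  rw [sum_rpow_qAB q (a/(m:ℝ)) α hc hn, sum_rpow_qBext (a/(m:ℝ)) α hmca hn, hmc]
  simp only [mul_assoc]
  ring

/-- With `q` full rank, `a ∈ (0, m·min_i q_i)`, `a_i := a/m` (and `p`
full rank in case `α < 0`): `Δ̃_n^{(α)}` is increasing in `n` for finite `α < 1`, `α ≠ 0`;
constant in `n` for `α = 1`; and decreasing in `n` for finite `α > 1`. -/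
theorem deltaTilde_monotonicity {m : ℕ} (p q : Fin m → ℝ)
    (hp : IsProbDist p) (hq : IsProbDist q) (hq_rank : ∀ i, q i ≠ 0)
    (a : ℝ) (ha : 0 < a) (ha' : a < (m : ℝ) * ⨅ i, q i) (α : ℝ)
    (hp_rank : α < 0 → ∀ i, p i ≠ 0) :
    (α < 1 → α ≠ 0 → MonotoneOn (deltaTilde p q a α) (Set.Ici 1)) ∧
    (α = 1 → ∀ n : ℕ, 1 ≤ n → deltaTilde p q a α n = deltaTilde p q a α 1) ∧
    (1 < α → AntitoneOn (deltaTilde p q a α) (Set.Ici 1)) := by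
  classical
  have hm : 0 < m := by
    rcases Nat.eq_zero_or_pos m with h | h
    · subst h
      simp only [Nat.cast_zero, zero_mul] at ha'
      linarith
    · exact h
  have hmR : (0:ℝ) < m := by exact_mod_cast hm
  have hne : Nonempty (Fin m) := ⟨⟨0, hm⟩⟩
  have hinf_le : ∀ i, (⨅ j, q j) ≤ q i := fun i =>
    ciInf_le (Set.Finite.bddBelow (Set.finite_range q)) i
  have hciq : ∀ i, a / (m:ℝ) < q i := by
    intro i
    rw [div_lt_iff₀ hmR]
    nlinarith [hinf_le i]
  have hc : 0 < a / (m:ℝ) := by positivity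
  have hx : ∀ i, 0 < q i - a / (m:ℝ) := fun i => sub_pos.mpr (hciq i)
  have ha1 : a < 1 := by
    have h2 : (m:ℝ) * (⨅ j, q j) ≤ 1 := by
      rw [← hq.2]
      calc (m:ℝ) * (⨅ j, q j) = ∑ _i : Fin m, (⨅ j, q j) := by
            rw [Finset.sum_const, Finset.card_univ, Fintype.card_fin, nsmul_eq_mul]
        _ ≤ ∑ i, q i := Finset.sum_le_sum fun i _ => hinf_le i
    linarith
  have hmc : (m:ℝ) * (a / (m:ℝ)) = a := by field_simp
  have hsum_x : ∑ i, (q i - a / (m:ℝ)) = 1 - a := by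
    rw [Finset.sum_sub_distrib, hq.2, Finset.sum_const, Finset.card_univ, Fintype.card_fin,
      nsmul_eq_mul, hmc]
  -- abbreviations for the constants appearing in the closed form
  set C : ℝ := ∑ i, (q i - a/(m:ℝ)) ^ α with hC_def
  set C2 : ℝ := (m:ℝ) * (a/(m:ℝ)) ^ α with hC2_def
  set D : ℝ := (1 - a) ^ α with hD_def
  set D2 : ℝ := a ^ α with hD2_def
  have hC : 0 < C := Finset.sum_pos (fun i _ => Real.rpow_pos_of_pos (hx i) α)
    Finset.univ_nonempty
  have hC2 : 0 < C2 := by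
    have := Real.rpow_pos_of_pos hc α
    positivity
  have hD : 0 < D := Real.rpow_pos_of_pos (by linarith) α
  have hD2 : 0 < D2 := Real.rpow_pos_of_pos ha α
  -- the key Jensen cross identity : E * D2 = C2 * D where E = m ((1-a)/m)^α
  have hED : (m:ℝ) * ((1-a)/(m:ℝ)) ^ α * D2 = C2 * D := by
    rw [hD2_def, hC2_def, hD_def, Real.div_rpow (by linarith) hmR.le,
      Real.div_rpow ha.le hmR.le]
    ring
  refine ⟨?_, ?_, ?_⟩
  · -- α < 1, α ≠ 0 : monotone
    intro hα1 hα0 n₁ hn₁ n₂ hn₂ h12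
    have hn₁' : 1 ≤ n₁ := Set.mem_Ici.mp hn₁
    have hn₂' : 1 ≤ n₂ := Set.mem_Ici.mp hn₂
    have hαne : α ≠ 1 := ne_of_lt hα1
    have hn₁R : (0:ℝ) < n₁ := by exact_mod_cast hn₁'
    have ht1 : 0 < (n₁:ℝ) ^ (1-α) := Real.rpow_pos_of_pos hn₁R _
    have ht2 : 0 < (n₂:ℝ) ^ (1-α) := Real.rpow_pos_of_pos (by exact_mod_cast hn₂') _
    have htle : (n₁:ℝ) ^ (1-α) ≤ (n₂:ℝ) ^ (1-α) :=
      Real.rpow_le_rpow hn₁R.le (by exact_mod_cast h12) (by linarith)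
    rw [deltaTilde_eval p q a α hmR hc hn₁' hαne, deltaTilde_eval p q a α hmR hc hn₂' hαne]
    rcases lt_or_gt_of_ne hα0 with hneg | hpos
    · -- α < 0 : K < 0, convex Jensen
      have hK : Real.sign α / (1 - α) < 0 := by
        rw [Real.sign_of_neg hneg]
        apply div_neg_of_neg_of_pos (by norm_num) (by linarith)
      have hje := jensen_ge hm (fun i => q i - a/(m:ℝ)) hx (Or.inl hneg)
      rw [hsum_x] at hje
      have hcross : D * C2 ≤ D2 * C := by nlinarith
      have hlog := log_cross hD hD2 hC hC2 ht1 htle hcross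
      have := mul_le_mul_of_nonpos_left (by linarith [hlog] :
        Real.log (C + C2 * (n₂:ℝ) ^ (1-α)) - Real.log (D + D2 * (n₂:ℝ) ^ (1-α)) ≤
          Real.log (C + C2 * (n₁:ℝ) ^ (1-α)) - Real.log (D + D2 * (n₁:ℝ) ^ (1-α))) hK.le
      linarith
    · -- 0 < α < 1 : K > 0, concave Jensen
      have hK : 0 < Real.sign α / (1 - α) := by
        rw [Real.sign_of_pos hpos]
        apply div_pos one_pos (by linarith)
      have hje := jensen_le hm (fun i => q i - a/(m:ℝ)) hx hpos.le hα1.le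
      rw [hsum_x] at hje
      have hcross : C * D2 ≤ C2 * D := by nlinarith
      have hlog := log_cross hC hC2 hD hD2 ht1 htle hcross
      have := mul_le_mul_of_nonneg_left hlog hK.le
      linarith
  · -- α = 1 : constant
    intro hα1 n hn
    subst hα1
    have hmca : 0 < (m:ℝ) * (a / (m:ℝ)) := by rw [hmc]; exact ha
    have e1 := shannon_qAB q (a/(m:ℝ)) hc hn
    have e2 := shannon_qAB q (a/(m:ℝ)) hc (le_refl 1)
    have e3 := shannon_qBext (m := m) (a/(m:ℝ)) hmca hn
    have e4 := shannon_qBext (m := m) (a/(m:ℝ)) hmca (le_refl 1)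
    rw [hmc] at e3 e4
    simp only [deltaTilde, renyi, eq_self_iff_true, if_true]
    rw [e1, e2, e3, e4, Nat.cast_one, Real.log_one]
    have hmcln : ∀ x : ℝ, (m:ℝ) * (a/(m:ℝ) * x) = a * x := by
      intro x; rw [← mul_assoc, hmc]
    rw [hmcln, hmcln]
    ring
  · -- 1 < α : antitone
    intro hα1 n₁ hn₁ n₂ hn₂ h12
    have hn₁' : 1 ≤ n₁ := Set.mem_Ici.mp hn₁
    have hn₂' : 1 ≤ n₂ := Set.mem_Ici.mp hn₂
    have hαne : α ≠ 1 := ne_of_gt hα1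
    have hn₁R : (0:ℝ) < n₁ := by exact_mod_cast hn₁'
    have hn₂R : (0:ℝ) < n₂ := by exact_mod_cast hn₂'
    have ht2 : 0 < (n₂:ℝ) ^ (1-α) := Real.rpow_pos_of_pos hn₂R _
    have htle : (n₂:ℝ) ^ (1-α) ≤ (n₁:ℝ) ^ (1-α) :=
      Real.rpow_le_rpow_of_nonpos hn₁R (by exact_mod_cast h12) (by linarith)
    rw [deltaTilde_eval p q a α hmR hc hn₁' hαne, deltaTilde_eval p q a α hmR hc hn₂' hαne]
    have hK : Real.sign α / (1 - α) < 0 := by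
      rw [Real.sign_of_pos (by linarith)]
      apply div_neg_of_pos_of_neg one_pos (by linarith)
    have hje := jensen_ge hm (fun i => q i - a/(m:ℝ)) hx (Or.inr hα1.le)
    rw [hsum_x] at hje
    have hcross : D * C2 ≤ D2 * C := by nlinarith
    have hlog := log_cross hD hD2 hC hC2 ht2 htle hcross
    have := mul_le_mul_of_nonpos_left (by linarith [hlog] :
      Real.log (C + C2 * (n₁:ℝ) ^ (1-α)) - Real.log (D + D2 * (n₁:ℝ) ^ (1-α)) ≤
        Real.log (C + C2 * (n₂:ℝ) ^ (1-α)) - Real.log (D + D2 * (n₂:ℝ) ^ (1-α))) hK.le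
    linarith
end

section
/- Let p, q ∈ ℝ^m be probability distributions of full rank, let a ∈ (0, m·min_i q_i), set a_i := a/m, and let q_{AB} be the corresponding bipartite extension of q with parameter n ∈ ℕ; define Δ̃_n^{(α)} := H_α(q_{AB}) − H_α(q_B) − H_α(p). Then: for every finite real α < 0, lim_{n→∞} Δ̃_n^{(α)} = −log m − H_α(p); for every α ∈ (0,1), lim_{n→∞} Δ̃_n^{(α)} = log m − H_α(p); and for every finite real α > 1, lim_{n→∞} Δ̃_n^{(α)} = H_α(((q_i − a/m)/(1−a))_i) − H_α(p). -/
open scoped BigOperators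

open Filter in
private lemma aux_one (A M : ℝ) (hA : 0 < A) (hM : 0 < M) {β : ℝ} (hβ : 0 < β) :
    Tendsto (fun n : ℕ => Real.log (A + M * (n : ℝ) ^ β) - Real.log ((n : ℝ) ^ β))
      atTop (nhds (Real.log M)) := by
  have hg : Tendsto (fun n : ℕ => (n : ℝ) ^ β) atTop atTop :=
    (tendsto_rpow_atTop hβ).comp tendsto_natCast_atTop_atTop
  have h0 : Tendsto (fun n : ℕ => A / (n : ℝ) ^ β) atTop (nhds 0) := by
    have := hg.inv_tendsto_atTop.const_mul A
    simpa [div_eq_mul_inv] using this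
  have h1 : Tendsto (fun n : ℕ => A / (n : ℝ) ^ β + M) atTop (nhds M) := by
    simpa using h0.add_const M
  have h2 : Tendsto (fun n : ℕ => Real.log (A / (n : ℝ) ^ β + M)) atTop
      (nhds (Real.log M)) := (Real.continuousAt_log hM.ne').tendsto.comp h1
  refine h2.congr' ?_
  filter_upwards [hg.eventually_gt_atTop 0] with n hn
  have hgne : ((n : ℝ) ^ β) ≠ 0 := hn.ne'
  rw [← Real.log_div (by positivity) hgne, add_div, mul_div_assoc, div_self hgne, mul_one]

open Filter in
private lemma aux_top (A B M C : ℝ) (hA : 0 < A) (hB : 0 < B) (hM : 0 < M) (hC : 0 < C)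
    {β : ℝ} (hβ : 0 < β) :
    Tendsto (fun n : ℕ =>
        Real.log (A + M * (n : ℝ) ^ β) - Real.log (B + C * (n : ℝ) ^ β))
      atTop (nhds (Real.log M - Real.log C)) :=
  ((aux_one A M hA hM hβ).sub (aux_one B C hB hC hβ)).congr fun n => by ring

open Filter in
private lemma aux_bot (A B M C : ℝ) (hA : 0 < A) (hB : 0 < B) {β : ℝ} (hβ : β < 0) :
    Tendsto (fun n : ℕ =>
        Real.log (A + M * (n : ℝ) ^ β) - Real.log (B + C * (n : ℝ) ^ β))
      atTop (nhds (Real.log A - Real.log B)) := by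
  have hg : Tendsto (fun n : ℕ => (n : ℝ) ^ β) atTop (nhds 0) := by
    have := (tendsto_rpow_neg_atTop (y := -β) (by linarith)).comp tendsto_natCast_atTop_atTop
    simpa [Function.comp_def] using this
  have h1 : ∀ D E : ℝ, 0 < D → Tendsto (fun n : ℕ => Real.log (D + E * (n : ℝ) ^ β))
      atTop (nhds (Real.log D)) := by
    intro D E hD
    have : Tendsto (fun n : ℕ => D + E * (n : ℝ) ^ β) atTop (nhds D) := by
      simpa using tendsto_const_nhds.add (hg.const_mul E)
    exact (Real.continuousAt_log hD.ne').tendsto.comp this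
  exact (h1 A M hA).sub (h1 B C hB)

private lemma deltaTilde_eq {m : ℕ} (p q : Fin m → ℝ) (a α : ℝ) (hm : 0 < (m : ℝ))
    (ha : 0 ≤ a) (hα : α ≠ 1) (n : ℕ) (hn : 1 ≤ n) :
    deltaTilde p q a α n =
      (Real.sign α / (1 - α)) *
        (Real.log ((∑ i, (q i - a / (m : ℝ)) ^ α) +
            ((m : ℝ) * (a / (m : ℝ)) ^ α) * (n : ℝ) ^ (1 - α)) -
         Real.log ((1 - a) ^ α + a ^ α * (n : ℝ) ^ (1 - α))) - renyi α p := by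
  have hn' : (0 : ℝ) < n := by exact_mod_cast hn
  have hc : (0 : ℝ) ≤ a / m := div_nonneg ha hm.le
  have hpow : ∀ x : ℝ, 0 ≤ x → (n : ℕ) • ((x / (n : ℝ)) ^ α) = x ^ α * (n : ℝ) ^ (1 - α) := by
    intro x hx
    rw [nsmul_eq_mul, Real.div_rpow hx hn'.le, Real.rpow_sub hn', Real.rpow_one]
    ring
  have e1 : ∑ x : Fin m × Fin (n + 1), qAB q (fun _ => a / (m : ℝ)) n x ^ α =
      (∑ i, (q i - a / (m : ℝ)) ^ α) +
        ((m : ℝ) * (a / (m : ℝ)) ^ α) * (n : ℝ) ^ (1 - α) := by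
    rw [Fintype.sum_prod_type]
    have hrow : ∀ i, ∑ j : Fin (n + 1), qAB q (fun _ => a / (m : ℝ)) n (i, j) ^ α =
        (q i - a / (m : ℝ)) ^ α + (a / (m : ℝ)) ^ α * (n : ℝ) ^ (1 - α) := by
      intro i
      rw [Fin.sum_univ_succ]
      simp only [qAB, if_true, ite_true, Fin.succ_ne_zero, if_neg, ite_false]
      rw [Finset.sum_const, Finset.card_univ, Fintype.card_fin, hpow _ hc]
    rw [Finset.sum_congr rfl fun i _ => hrow i, Finset.sum_add_distrib,
      Finset.sum_const, Finset.card_univ, Fintype.card_fin, nsmul_eq_mul]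
    ring
  have hsa : ∑ _i : Fin m, a / (m : ℝ) = a := by
    rw [Finset.sum_const, Finset.card_univ, Fintype.card_fin, nsmul_eq_mul,
      mul_div_cancel₀ _ hm.ne']
  have e2 : ∑ j : Fin (n + 1), qBext (fun _ : Fin m => a / (m : ℝ)) n j ^ α =
      (1 - a) ^ α + a ^ α * (n : ℝ) ^ (1 - α) := by
    rw [Fin.sum_univ_succ]
    simp only [qBext, if_true, ite_true, Fin.succ_ne_zero, if_neg, ite_false, hsa]
    rw [Finset.sum_const, Finset.card_univ, Fintype.card_fin, hpow _ ha]
  rw [deltaTilde, renyi, if_neg hα, renyi, if_neg hα, e1, e2]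
  ring

/-- With `p, q` full rank and `a ∈ (0, m·min_i q_i)`, `a_i := a/m`:
`lim_{n→∞} Δ̃_n^{(α)}` equals `-log m - H_α(p)` for `α < 0`, `log m - H_α(p)` for
`0 < α < 1`, and `H_α(((q_i - a/m)/(1-a))_i) - H_α(p)` for `α > 1`. -/
theorem deltaTilde_limits {m : ℕ} (p q : Fin m → ℝ)
    (hp : IsProbDist p) (hq : IsProbDist q)
    (hp_rank : ∀ i, p i ≠ 0) (hq_rank : ∀ i, q i ≠ 0)
    (a : ℝ) (ha : 0 < a) (ha' : a < (m : ℝ) * ⨅ i, q i) :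
    (∀ α : ℝ, α < 0 →
      Filter.Tendsto (deltaTilde p q a α) Filter.atTop
        (nhds (-Real.log m - renyi α p))) ∧
    (∀ α : ℝ, 0 < α → α < 1 →
      Filter.Tendsto (deltaTilde p q a α) Filter.atTop
        (nhds (Real.log m - renyi α p))) ∧
    (∀ α : ℝ, 1 < α →
      Filter.Tendsto (deltaTilde p q a α) Filter.atTop
        (nhds (renyi α (fun i => (q i - a / (m : ℝ)) / (1 - a)) - renyi α p))) := by
  have hm0 : 0 < m := by
    rcases Nat.eq_zero_or_pos m with h | h
    · exfalso; subst h; simpa using hq.2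
    · exact h
  have hm : (0 : ℝ) < m := by exact_mod_cast hm0
  have : Nonempty (Fin m) := Fin.pos_iff_nonempty.mp hm0
  have hinf : ∀ i, (⨅ j, q j) ≤ q i := fun i => ciInf_le (Finite.bddBelow_range q) i
  have hcq : ∀ i, a / m < q i := by
    intro i
    rw [div_lt_iff₀ hm]
    have h2 : (m : ℝ) * ⨅ j, q j ≤ (m : ℝ) * q i :=
      mul_le_mul_of_nonneg_left (hinf i) hm.le
    nlinarith
  have hqc : ∀ i, 0 < q i - a / m := fun i => sub_pos.mpr (hcq i)
  have ha1 : a < 1 := by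
    have h2 : (m : ℝ) * ⨅ j, q j ≤ ∑ i, q i := by
      calc (m : ℝ) * ⨅ j, q j = ∑ _i : Fin m, ⨅ j, q j := by
            rw [Finset.sum_const, Finset.card_univ, Fintype.card_fin, nsmul_eq_mul]
        _ ≤ ∑ i, q i := Finset.sum_le_sum fun i _ => hinf i
    rw [hq.2] at h2; linarith
  have h1a : 0 < 1 - a := by linarith
  have hc : 0 < a / (m : ℝ) := div_pos ha hm
  refine ⟨?_, ?_, ?_⟩
  · -- α < 0
    intro α hα
    have hα1 : α ≠ 1 := by linarith
    have hA : 0 < ∑ i, (q i - a / (m : ℝ)) ^ α :=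
      Finset.sum_pos (fun i _ => Real.rpow_pos_of_pos (hqc i) α) Finset.univ_nonempty
    have hM : 0 < (m : ℝ) * (a / (m : ℝ)) ^ α := mul_pos hm (Real.rpow_pos_of_pos hc α)
    have hB : 0 < (1 - a) ^ α := Real.rpow_pos_of_pos h1a α
    have hC : 0 < a ^ α := Real.rpow_pos_of_pos ha α
    have hβ : 0 < 1 - α := by linarith
    have key := ((aux_top _ _ _ _ hA hB hM hC hβ).const_mul
      (Real.sign α / (1 - α))).sub_const (renyi α p)
    have key2 := key.congr' (by
      filter_upwards [Filter.eventually_ge_atTop 1] with n hn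
      exact (deltaTilde_eq p q a α hm ha.le hα1 n hn).symm)
    have hlog : Real.log ((m : ℝ) * (a / (m : ℝ)) ^ α) - Real.log (a ^ α)
        = (1 - α) * Real.log m := by
      rw [Real.log_mul hm.ne' (Real.rpow_pos_of_pos hc α).ne', Real.log_rpow hc,
        Real.log_rpow ha, Real.log_div ha.ne' hm.ne']
      ring
    have hval : Real.sign α / (1 - α) * (Real.log ((m : ℝ) * (a / (m : ℝ)) ^ α)
        - Real.log (a ^ α)) = -Real.log m := by
      rw [hlog, Real.sign_of_neg hα]
      have h1α : (1 : ℝ) - α ≠ 0 := by linarith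
      field_simp
    rw [show -Real.log m - renyi α p
        = Real.sign α / (1 - α) * (Real.log ((m : ℝ) * (a / (m : ℝ)) ^ α)
          - Real.log (a ^ α)) - renyi α p by rw [hval]]
    exact key2
  · -- 0 < α < 1
    intro α hα0 hα
    have hα1 : α ≠ 1 := by linarith
    have hA : 0 < ∑ i, (q i - a / (m : ℝ)) ^ α :=
      Finset.sum_pos (fun i _ => Real.rpow_pos_of_pos (hqc i) α) Finset.univ_nonempty
    have hM : 0 < (m : ℝ) * (a / (m : ℝ)) ^ α := mul_pos hm (Real.rpow_pos_of_pos hc α)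
    have hB : 0 < (1 - a) ^ α := Real.rpow_pos_of_pos h1a α
    have hC : 0 < a ^ α := Real.rpow_pos_of_pos ha α
    have hβ : 0 < 1 - α := by linarith
    have key := ((aux_top _ _ _ _ hA hB hM hC hβ).const_mul
      (Real.sign α / (1 - α))).sub_const (renyi α p)
    have key2 := key.congr' (by
      filter_upwards [Filter.eventually_ge_atTop 1] with n hn
      exact (deltaTilde_eq p q a α hm ha.le hα1 n hn).symm)
    have hlog : Real.log ((m : ℝ) * (a / (m : ℝ)) ^ α) - Real.log (a ^ α)
        = (1 - α) * Real.log m := by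
      rw [Real.log_mul hm.ne' (Real.rpow_pos_of_pos hc α).ne', Real.log_rpow hc,
        Real.log_rpow ha, Real.log_div ha.ne' hm.ne']
      ring
    have hval : Real.sign α / (1 - α) * (Real.log ((m : ℝ) * (a / (m : ℝ)) ^ α)
        - Real.log (a ^ α)) = Real.log m := by
      rw [hlog, Real.sign_of_pos hα0]
      have h1α : (1 : ℝ) - α ≠ 0 := by linarith
      field_simp
    rw [show Real.log m - renyi α p
        = Real.sign α / (1 - α) * (Real.log ((m : ℝ) * (a / (m : ℝ)) ^ α)
          - Real.log (a ^ α)) - renyi α p by rw [hval]]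
    exact key2
  · -- 1 < α
    intro α hα
    have hα1 : α ≠ 1 := by linarith
    have hA : 0 < ∑ i, (q i - a / (m : ℝ)) ^ α :=
      Finset.sum_pos (fun i _ => Real.rpow_pos_of_pos (hqc i) α) Finset.univ_nonempty
    have hB : 0 < (1 - a) ^ α := Real.rpow_pos_of_pos h1a α
    have hβ : (1 : ℝ) - α < 0 := by linarith
    have key := ((aux_bot _ _ ((m : ℝ) * (a / (m : ℝ)) ^ α) (a ^ α) hA hB hβ).const_mul
      (Real.sign α / (1 - α))).sub_const (renyi α p)
    have key2 := key.congr' (by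
      filter_upwards [Filter.eventually_ge_atTop 1] with n hn
      exact (deltaTilde_eq p q a α hm ha.le hα1 n hn).symm)
    have hval : Real.sign α / (1 - α) * (Real.log (∑ i, (q i - a / (m : ℝ)) ^ α)
        - Real.log ((1 - a) ^ α)) = renyi α (fun i => (q i - a / (m : ℝ)) / (1 - a)) := by
      rw [renyi, if_neg hα1]
      congr 1
      rw [← Real.log_div hA.ne' hB.ne']
      congr 1
      rw [eq_comm]
      calc ∑ i, ((q i - a / (m : ℝ)) / (1 - a)) ^ α
          = ∑ i, (q i - a / (m : ℝ)) ^ α / (1 - a) ^ α :=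
            Finset.sum_congr rfl fun i _ => Real.div_rpow (hqc i).le h1a.le α
        _ = _ := (Finset.sum_div _ _ _).symm
    rw [← hval]
    exact key2
end

section
/- Let S : Δ⁺ → ℝ be symmetric, additive, and subadditive. Then S(p) ≤ S(η_m) for every p ∈ Δ_m⁺ and every m ∈ ℕ. -/
open scoped BigOperators

/-- If `S` is symmetric, additive and subadditive on the positive
distributions, then `S(p) ≤ S(η_m)` for every `p ∈ Δ_m⁺`. -/
theorem uniform_maximizes (S : ∀ n : ℕ, (Fin n → ℝ) → ℝ)
    (hsym : SymmetricS S) (hadd : AdditiveS S) (hsub : SubadditiveS S)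
    (m : ℕ) (p : Fin m → ℝ) (hp : IsPosProbDist p) :
    S m p ≤ S m (fun _ => 1 / (m : ℝ)) := by
  classical
  -- m ≠ 0
  have hm : m ≠ 0 := by
    rintro rfl
    exact absurd hp.2 (by simp)
  have hm0 : (0:ℝ) < m := by
    exact_mod_cast Nat.pos_of_ne_zero hm
  have hminv : (0:ℝ) < 1 / m := by positivity
  set η : Fin m → ℝ := fun _ => 1 / (m:ℝ) with hη_def
  have hη : IsPosProbDist η := by
    constructor
    · intro i; exact hminv
    · simp [hη_def, Finset.sum_const]
      field_simp
  -- the shifted bipartite distribution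
  set P : Fin m × Fin m → ℝ := fun x => (1 / (m:ℝ)) * p (x.2 - x.1) with hP_def
  haveI : NeZero m := ⟨hm⟩
  have hsum_shift : ∀ i : Fin m, ∑ j : Fin m, p (j - i) = 1 := by
    intro i
    rw [← hp.2]
    exact Fintype.sum_equiv (Equiv.subRight i) _ _ (fun j => rfl)
  have hsum_shift' : ∀ j : Fin m, ∑ i : Fin m, p (j - i) = 1 := by
    intro j
    rw [← hp.2]
    exact Fintype.sum_equiv (Equiv.subLeft j) _ _ (fun i => rfl)
  have hP : IsPosProbDist P := by
    constructor
    · intro x; exact mul_pos hminv (hp.1 _)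
    · rw [Fintype.sum_prod_type]
      have : ∀ i : Fin m, ∑ j : Fin m, P (i, j) = 1 / m := by
        intro i
        simp only [hP_def]
        rw [← Finset.mul_sum, hsum_shift i, mul_one]
      simp only [this, Finset.sum_const, Finset.card_univ, Fintype.card_fin,
        nsmul_eq_mul]
      field_simp
  -- marginals of P are uniform
  have hmargA : ∀ i : Fin m, ∑ j, P (i, j) = 1 / m := by
    intro i
    simp only [hP_def]
    rw [← Finset.mul_sum, hsum_shift i, mul_one]
  have hmargB : ∀ j : Fin m, ∑ i, P (i, j) = 1 / m := by
    intro j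
    simp only [hP_def]
    rw [← Finset.mul_sum, hsum_shift' j, mul_one]
  set e : Fin m × Fin m ≃ Fin (m * m) := finProdFinEquiv with he_def
  -- kron η p is a positive distribution on Fin (m*m)
  have hkron : IsPosProbDist (fun x : Fin (m * m) => kron η p (e.symm x)) := by
    constructor
    · intro x; exact mul_pos hminv (hp.1 _)
    · rw [← Equiv.sum_comp e (fun x => kron η p (e.symm x))]
      simp only [Equiv.symm_apply_apply]
      rw [Fintype.sum_prod_type]
      simp only [kron, hη_def]
      simp only [← Finset.mul_sum, hp.2, mul_one]
      simp only [Finset.sum_const, Finset.card_univ, Fintype.card_fin, nsmul_eq_mul]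
      field_simp
  -- the shear permutation
  set τ : Fin m × Fin m ≃ Fin m × Fin m :=
    Equiv.prodShear (Equiv.refl (Fin m)) (fun i => Equiv.subRight i) with hτ_def
  set σ : Equiv.Perm (Fin (m * m)) := e.symm.trans (τ.trans e) with hσ_def
  have hcomp : (fun x : Fin (m * m) => kron η p (e.symm x)) ∘ σ
      = fun x => P (e.symm x) := by
    funext x
    simp only [Function.comp, hσ_def, Equiv.trans_apply, Equiv.symm_apply_apply,
      hτ_def, Equiv.prodShear_apply, Equiv.refl_apply, Equiv.subRight_apply,
      kron, hP_def, hη_def]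
  have hsymm := hsym (m * m) _ hkron σ
  rw [hcomp] at hsymm
  have h1 : S (m * m) (fun x => P (e.symm x)) = S m η + S m p := by
    rw [hsymm]
    exact hadd m m η p hη hp
  have h2 := hsub m m P hP
  have h3 : (fun x : Fin (m * m) =>
      kron (fun i => ∑ j, P (i, j)) (fun j => ∑ i, P (i, j)) (e.symm x))
      = fun x => kron η η (e.symm x) := by
    funext x
    simp only [kron, hmargA, hmargB, hη_def]
  rw [h3] at h2
  have h4 : S (m * m) (fun x => kron η η (e.symm x)) = S m η + S m η :=
    hadd m m η η hη hη
  rw [h1, h4] at h2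
  linarith
end

section
/- Let S : Δ⁺ → ℝ be continuous, symmetric, additive, and subadditive. Then S is Schur-concave: for all r, s ∈ Δ_m⁺ with r ≻ s, one has S(r) ≤ S(s). -/
open scoped BigOperators

open Finset in
private lemma abel_aux (m : ℕ) (C d : ℕ → ℝ)
    (hC : ∀ i j, i ≤ j → j < m → C j ≤ C i)
    (hD : ∀ k, k ≤ m → ∑ j ∈ range k, d j ≤ 0) :
    ∀ n, 0 < n → n ≤ m → ∑ j ∈ range n, C j * d j ≤ C (n - 1) * ∑ j ∈ range n, d j := by
  intro n
  induction n with
  | zero => intro h; exact absurd h (lt_irrefl 0)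
  | succ n ih =>
    intro _ hnm
    rcases Nat.eq_zero_or_pos n with h0 | hn
    · subst h0; simp
    · have h1 := ih hn (le_trans (Nat.le_succ n) hnm)
      have hCn : C n ≤ C (n - 1) := hC (n - 1) n (Nat.sub_le n 1) (by omega)
      have hDn : ∑ j ∈ range n, d j ≤ 0 := hD n (by omega)
      rw [Finset.sum_range_succ, Finset.sum_range_succ, Nat.add_sub_cancel, mul_add]
      have h2 : C (n - 1) * ∑ j ∈ range n, d j ≤ C n * ∑ j ∈ range n, d j := by nlinarith
      linarith

open Finset in
private lemma abel_le (m : ℕ) (C d : ℕ → ℝ)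
    (hC : ∀ i j, i ≤ j → j < m → C j ≤ C i)
    (hD : ∀ k, k ≤ m → ∑ j ∈ range k, d j ≤ 0)
    (hDm : ∑ j ∈ range m, d j = 0) :
    ∑ j ∈ range m, C j * d j ≤ 0 := by
  rcases Nat.eq_zero_or_pos m with h0 | hm
  · subst h0; simp
  · have h := abel_aux m C d hC hD m hm le_rfl
    rw [hDm, mul_zero] at h
    exact h

private lemma fin_strictMono_le {k m : ℕ} {f : Fin k → Fin m} (hf : StrictMono f) :
    ∀ v : ℕ, ∀ hv : v < k, v ≤ (f ⟨v, hv⟩ : ℕ) := by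
  intro v
  induction v with
  | zero => intro _; exact Nat.zero_le _
  | succ n ihn =>
    intro hv
    have hn : n < k := Nat.lt_of_succ_lt hv
    have h2 : f ⟨n, hn⟩ < f ⟨n + 1, hv⟩ := hf (Fin.mk_lt_mk.mpr (Nat.lt_succ_self n))
    have h3 := ihn hn
    have h4 : (f ⟨n, hn⟩ : ℕ) < (f ⟨n + 1, hv⟩ : ℕ) := h2
    omega

private lemma sum_range_dite {m : ℕ} (f : Fin m → ℝ) :
    ∀ k, k ≤ m → ∑ j ∈ Finset.range k, (if h : j < m then f ⟨j, h⟩ else 0) =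
      ∑ j ∈ Finset.univ.filter (fun j : Fin m => (j : ℕ) < k), f j := by
  intro k
  induction k with
  | zero => simp
  | succ k ih =>
    intro hk
    have hkm : k < m := hk
    rw [Finset.sum_range_succ, ih (le_of_lt hkm), dif_pos hkm]
    have hins : (Finset.univ.filter fun j : Fin m => (j : ℕ) < k + 1) =
        insert ⟨k, hkm⟩ (Finset.univ.filter fun j : Fin m => (j : ℕ) < k) := by
      ext j
      simp only [Finset.mem_filter, Finset.mem_univ, true_and, Finset.mem_insert]
      constructor
      · intro hj
        rcases Nat.lt_succ_iff_lt_or_eq.mp hj with h | h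
        · exact Or.inr h
        · exact Or.inl (Fin.ext h)
      · rintro (rfl | hj)
        · exact Nat.lt_succ_self k
        · exact Nat.lt_succ_of_lt hj
    rw [hins, Finset.sum_insert (by simp)]
    ring

open Finset in
private lemma sum_le_top {m k : ℕ} (v : Fin m → ℝ) (hv : ∀ i, 0 ≤ v i)
    (hanti : Antitone v) (B : Finset (Fin m)) (hB : B.card ≤ k) :
    ∑ x ∈ B, v x ≤ ∑ j ∈ Finset.univ.filter (fun j : Fin m => (j : ℕ) < k), v j := by
  classical
  have hnm : B.card ≤ m := by
    simpa using Finset.card_le_univ B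
  set f := B.orderEmbOfFin rfl with hf
  have himg : Finset.image (fun i => f i) Finset.univ = B := by
    apply Finset.coe_injective
    rw [Finset.coe_image, Finset.coe_univ, Set.image_univ]
    exact Finset.range_orderEmbOfFin B rfl
  have h1 : ∑ x ∈ B, v x = ∑ i : Fin B.card, v (f i) := by
    refine (Finset.sum_bij (fun (i : Fin B.card) _ => f i) ?_ ?_ ?_ ?_).symm
    · intro i _; exact Finset.orderEmbOfFin_mem B rfl i
    · intro a _ b _ h; exact f.injective h
    · intro x hx
      have : x ∈ Set.range f := by
        rw [Finset.range_orderEmbOfFin]; exact hx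
      obtain ⟨i, hi⟩ := this
      exact ⟨i, Finset.mem_univ _, hi⟩
    · intro i _; rfl
  have h2 : ∀ i : Fin B.card, v (f i) ≤ v ⟨(i : ℕ), lt_of_lt_of_le i.2 hnm⟩ := by
    intro i
    apply hanti
    rw [Fin.le_def]
    exact fin_strictMono_le f.strictMono i i.2
  have h3 : ∑ i : Fin B.card, v ⟨(i : ℕ), lt_of_lt_of_le i.2 hnm⟩ =
      ∑ j ∈ Finset.univ.filter (fun j : Fin m => (j : ℕ) < B.card), v j := by
    apply Finset.sum_bij (fun (i : Fin B.card) _ => (⟨(i : ℕ), lt_of_lt_of_le i.2 hnm⟩ : Fin m))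
    · intro i _
      simp [i.2]
    · intro a _ b _ h
      injection h with h'
      exact Fin.ext h' 
    · intro j hj
      simp only [Finset.mem_filter, Finset.mem_univ, true_and] at hj
      exact ⟨⟨(j : ℕ), hj⟩, Finset.mem_univ _, rfl⟩
    · intro i _; rfl
  calc ∑ x ∈ B, v x = ∑ i : Fin B.card, v (f i) := h1
    _ ≤ ∑ i : Fin B.card, v ⟨(i : ℕ), lt_of_lt_of_le i.2 hnm⟩ := Finset.sum_le_sum fun i _ => h2 i
    _ = ∑ j ∈ Finset.univ.filter (fun j : Fin m => (j : ℕ) < B.card), v j := h3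
    _ ≤ ∑ j ∈ Finset.univ.filter (fun j : Fin m => (j : ℕ) < k), v j := by
        apply Finset.sum_le_sum_of_subset_of_nonneg
        · intro j hj
          simp only [Finset.mem_filter, Finset.mem_univ, true_and] at hj ⊢
          omega
        · exact fun j _ _ => hv j


open Finset in
private lemma key_ineq {m : ℕ} (r s : Fin m → ℝ) (hr : ∀ i, 0 ≤ r i)
    (hsum : ∑ i, s i = ∑ i, r i) (hmaj : Majorizes r s) (c : Fin m → ℝ) :
    ∃ σ : Equiv.Perm (Fin m), ∑ i, c i * s i ≤ ∑ i, c i * r (σ i) := by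
  classical
  set π := Tuple.sort (fun i => -r i) with hπ
  set τ := Tuple.sort (fun i => -c i) with hτ
  have hrπ : Antitone (fun j => r (π j)) := by
    intro a b hab
    have h := Tuple.monotone_sort (fun i => -r i) hab
    simp only [Function.comp_apply] at h
    linarith
  have hcτ : Antitone (fun j => c (τ j)) := by
    intro a b hab
    have h := Tuple.monotone_sort (fun i => -c i) hab
    simp only [Function.comp_apply] at h
    linarith
  refine ⟨τ.symm.trans π, ?_⟩
  have hpart : ∀ k, k ≤ m → ∑ j ∈ range k,
      ((if h : j < m then s (τ ⟨j, h⟩) else 0) - (if h : j < m then r (π ⟨j, h⟩) else 0)) ≤ 0 := by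
    intro k hk
    rw [Finset.sum_sub_distrib, sum_range_dite (fun j => s (τ j)) k hk,
      sum_range_dite (fun j => r (π j)) k hk, sub_nonpos]
    set A : Finset (Fin m) := (univ.filter (fun j : Fin m => (j : ℕ) < k)).image τ with hA
    have hAsum : ∑ i ∈ A, s i = ∑ j ∈ univ.filter (fun j : Fin m => (j : ℕ) < k), s (τ j) :=
      Finset.sum_image (fun a _ b _ h => τ.injective h)
    have hAcard : A.card ≤ k := by
      rw [hA, Finset.card_image_of_injective _ τ.injective]
      calc (univ.filter (fun j : Fin m => (j : ℕ) < k)).card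
          ≤ (range k).card := Finset.card_le_card_of_injOn (fun j => (j : ℕ))
            (by intro j hj; simp only [Finset.mem_coe, mem_filter, mem_univ, true_and] at hj
                simpa using hj)
            (by intro a _ b _ h; exact Fin.ext h)
        _ = k := Finset.card_range k
    obtain ⟨B, hBcard, hBsum⟩ := hmaj A
    calc ∑ j ∈ univ.filter (fun j : Fin m => (j : ℕ) < k), s (τ j) = ∑ i ∈ A, s i := hAsum.symm
      _ ≤ ∑ i ∈ B, r i := hBsum
      _ = ∑ x ∈ B.image π.symm, r (π x) := by
          rw [Finset.sum_image (fun a _ b _ h => π.symm.injective h)]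
          simp
      _ ≤ ∑ j ∈ univ.filter (fun j : Fin m => (j : ℕ) < k), r (π j) := by
          apply sum_le_top _ (fun i => hr _) hrπ
          rw [Finset.card_image_of_injective _ π.symm.injective]
          exact le_trans hBcard hAcard
  have hfu : univ.filter (fun j : Fin m => (j : ℕ) < m) = univ := by
    ext j; simp [j.2]
  have hDm : ∑ j ∈ range m,
      ((if h : j < m then s (τ ⟨j, h⟩) else 0) - (if h : j < m then r (π ⟨j, h⟩) else 0)) = 0 := by
    rw [Finset.sum_sub_distrib, sum_range_dite (fun j => s (τ j)) m le_rfl,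
      sum_range_dite (fun j => r (π j)) m le_rfl, hfu,
      Equiv.sum_comp τ s, Equiv.sum_comp π r, hsum, sub_self]
  have hCanti : ∀ i j, i ≤ j → j < m →
      (if h : j < m then c (τ ⟨j, h⟩) else 0) ≤ (if h : i < m then c (τ ⟨i, h⟩) else 0) := by
    intro i j hij hj
    have hi : i < m := lt_of_le_of_lt hij hj
    rw [dif_pos hi, dif_pos hj]
    exact hcτ (show (⟨i, hi⟩ : Fin m) ≤ ⟨j, hj⟩ from hij)
  have habel := abel_le m (fun j => if h : j < m then c (τ ⟨j, h⟩) else 0)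
    (fun j => (if h : j < m then s (τ ⟨j, h⟩) else 0) - (if h : j < m then r (π ⟨j, h⟩) else 0))
    hCanti hpart hDm
  have e1 : ∑ j ∈ range m, (fun j => if h : j < m then c (τ ⟨j, h⟩) else 0) j *
      ((fun j => (if h : j < m then s (τ ⟨j, h⟩) else 0) -
        (if h : j < m then r (π ⟨j, h⟩) else 0)) j)
      = ∑ j ∈ range m, ((if h : j < m then c (τ ⟨j, h⟩) * s (τ ⟨j, h⟩) else 0)
        - (if h : j < m then c (τ ⟨j, h⟩) * r (π ⟨j, h⟩) else 0)) := by
    apply Finset.sum_congr rfl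
    intro j hj
    have hjm : j < m := Finset.mem_range.mp hj
    simp only [dif_pos hjm]
    ring
  rw [e1, Finset.sum_sub_distrib, sum_range_dite (fun j => c (τ j) * s (τ j)) m le_rfl,
    sum_range_dite (fun j => c (τ j) * r (π j)) m le_rfl, hfu] at habel
  have e2 : ∑ j : Fin m, c (τ j) * s (τ j) = ∑ i, c i * s i :=
    Equiv.sum_comp τ (fun i => c i * s i)
  have e3 : ∑ j : Fin m, c (τ j) * r (π j) = ∑ i, c i * r (π (τ.symm i)) := by
    rw [← Equiv.sum_comp τ (fun i => c i * r (π (τ.symm i)))]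
    simp
  rw [e2, e3, sub_nonpos] at habel
  simpa [Equiv.trans_apply] using habel


open Finset in
private lemma rado_mem {m : ℕ} (r s : Fin m → ℝ) (hr : ∀ i, 0 ≤ r i)
    (hsum : ∑ i, s i = ∑ i, r i) (hmaj : Majorizes r s) :
    s ∈ convexHull ℝ (Set.range (fun σ : Equiv.Perm (Fin m) => r ∘ σ)) := by
  classical
  by_contra hcon
  have hfin : (Set.range fun σ : Equiv.Perm (Fin m) => r ∘ σ).Finite := Set.finite_range _
  obtain ⟨f, u, hfu, hus⟩ := geometric_hahn_banach_closed_point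
    (convex_convexHull ℝ _) (hfin.isClosed_convexHull (𝕜 := ℝ)) hcon
  set c : Fin m → ℝ := fun i => f (Pi.single i 1) with hc
  have hf : ∀ x : Fin m → ℝ, f x = ∑ i, c i * x i := by
    intro x
    have hx : x = ∑ i, x i • (Pi.single i 1 : Fin m → ℝ) := by
      funext j
      rw [Finset.sum_apply]
      simp [Pi.single_apply]
    conv_lhs => rw [hx]
    rw [map_sum]
    simp only [map_smul, smul_eq_mul]
    exact Finset.sum_congr rfl fun i _ => mul_comm _ _
  obtain ⟨σ, hσ⟩ := key_ineq r s hr hsum hmaj c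
  have h1 : f (r ∘ σ) < u := hfu _ (subset_convexHull ℝ _ ⟨σ, rfl⟩)
  have h2 : f s ≤ f (r ∘ σ) := by
    rw [hf, hf]
    simpa [Function.comp] using hσ
  linarith

open Finset in
private lemma exists_convex_decomp {m : ℕ} (r s : Fin m → ℝ) (hr : ∀ i, 0 ≤ r i)
    (hsum : ∑ i, s i = ∑ i, r i) (hmaj : Majorizes r s) :
    ∃ (K : ℕ) (t : Fin K → ℝ) (σ : Fin K → Equiv.Perm (Fin m)),
      0 < K ∧ (∀ k, 0 < t k) ∧ (∑ k, t k) = 1 ∧ ∀ i, s i = ∑ k, t k * r (σ k i) := by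
  classical
  have hmem := rado_mem r s hr hsum hmaj
  rw [_root_.convexHull_eq] at hmem
  obtain ⟨ι, tt, w, z, hw0, hw1, hz, hcm⟩ := hmem
  rw [Finset.centerMass_eq_of_sum_1 _ _ hw1] at hcm
  set t' : Finset ι := tt.filter (fun i => w i ≠ 0) with ht'
  have hw1' : ∑ i ∈ t', w i = 1 := by
    rw [ht', Finset.sum_filter_ne_zero]
    exact hw1
  have hcm' : ∑ i ∈ t', w i • z i = s := by
    rw [ht', ← hcm]
    apply Finset.sum_filter_of_ne
    intro x _ hx
    intro h0
    rw [h0, zero_smul] at hx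
    exact hx rfl
  set σf : ι → Equiv.Perm (Fin m) := fun i =>
    if h : z i ∈ Set.range (fun σ : Equiv.Perm (Fin m) => r ∘ σ) then h.choose
    else Equiv.refl _ with hσf
  have hσf' : ∀ i ∈ t', r ∘ σf i = z i := by
    intro i hi
    have hzi : z i ∈ Set.range (fun σ : Equiv.Perm (Fin m) => r ∘ σ) :=
      hz i (Finset.mem_of_mem_filter i hi)
    rw [hσf]
    simp only [dif_pos hzi]
    exact hzi.choose_spec
  have hne : t'.Nonempty := by
    by_contra hh
    rw [Finset.not_nonempty_iff_eq_empty] at hh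
    rw [hh, Finset.sum_empty] at hw1'
    norm_num at hw1'
  refine ⟨t'.card, fun k => w ((t'.equivFin.symm k) : ι), fun k => σf ((t'.equivFin.symm k) : ι),
    Finset.card_pos.mpr hne, ?_, ?_, ?_⟩
  · intro k
    have hk := (t'.equivFin.symm k).2
    have h1 : w ((t'.equivFin.symm k) : ι) ≠ 0 := (Finset.mem_filter.mp hk).2
    have h2 : 0 ≤ w ((t'.equivFin.symm k) : ι) := hw0 _ (Finset.mem_of_mem_filter _ hk)
    exact lt_of_le_of_ne h2 (Ne.symm h1)
  · rw [Equiv.sum_comp t'.equivFin.symm (fun x : t' => w (x : ι)), Finset.sum_coe_sort t' w]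
    exact hw1'
  · intro i
    have := congrFun hcm' i
    rw [Finset.sum_apply] at this
    rw [← this]
    rw [← Finset.sum_coe_sort t' (fun j => (w j • z j) i),
      ← Equiv.sum_comp t'.equivFin.symm (fun x : t' => (w (x : ι) • z (x : ι)) i)]
    apply Finset.sum_congr rfl
    intro k _
    have hmem' := (t'.equivFin.symm k).2
    have hz' := hσf' _ hmem'
    simp only [Pi.smul_apply, smul_eq_mul]
    rw [← hz']
    rfl

/-- A continuous, symmetric, additive and subadditive `S` on the
positive distributions is Schur-concave: `r ≻ s` implies `S(r) ≤ S(s)`. -/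
theorem schur_concave (S : ∀ n : ℕ, (Fin n → ℝ) → ℝ)
    (hcont : ContinuousS S) (hsym : SymmetricS S)
    (hadd : AdditiveS S) (hsub : SubadditiveS S)
    (m : ℕ) (r s : Fin m → ℝ) (hr : IsPosProbDist r) (hs : IsPosProbDist s)
    (hmaj : Majorizes r s) :
    S m r ≤ S m s := by
    classical
  rcases Nat.eq_zero_or_pos m with hm0 | hm
  · exfalso
    have h2 := hr.2
    subst hm0
    simpa using h2
  obtain ⟨K, t, σ, hK, ht0, ht1, hsdef⟩ :=
    exists_convex_decomp r s (fun i => (hr.1 i).le) (hs.2.trans hr.2.symm) hmaj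
  have htP : IsPosProbDist t := ⟨ht0, ht1⟩
  set P : Fin m × Fin K → ℝ := fun x => t x.2 * r (σ x.2 x.1) with hPdef
  have hPprob : IsPosProbDist P := by
    constructor
    · intro x; exact mul_pos (ht0 _) (hr.1 _)
    · rw [Fintype.sum_prod_type, Finset.sum_comm]
      have h : ∀ k : Fin K, ∑ i : Fin m, P (i, k) = t k := by
        intro k
        show ∑ i : Fin m, t k * r (σ k i) = t k
        rw [← Finset.mul_sum, Equiv.sum_comp (σ k) r, hr.2, mul_one]
      rw [Finset.sum_congr rfl fun k _ => h k]
      exact ht1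
  have hma : (fun i => ∑ j, P (i, j)) = s := by
    funext i
    show ∑ j : Fin K, t j * r (σ j i) = s i
    exact (hsdef i).symm
  have hmb : (fun j => ∑ i, P (i, j)) = t := by
    funext j
    show ∑ i : Fin m, t j * r (σ j i) = t j
    rw [← Finset.mul_sum, Equiv.sum_comp (σ j) r, hr.2, mul_one]
  have hsub' := hsub m K P hPprob
  rw [hma, hmb] at hsub'
  have haddst := hadd m K s t hs htP
  have haddrt := hadd m K r t hr htP
  have hpprob : IsPosProbDist (fun x => kron r t (finProdFinEquiv.symm x)) := by
    constructor
    · intro x; exact mul_pos (hr.1 _) (ht0 _)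
    · rw [Equiv.sum_comp finProdFinEquiv.symm (fun y => kron r t y),
        Fintype.sum_prod_type]
      have h : ∀ i : Fin m, ∑ k : Fin K, kron r t (i, k) = r i := by
        intro i
        show ∑ k : Fin K, r i * t k = r i
        rw [← Finset.mul_sum, ht1, mul_one]
      rw [Finset.sum_congr rfl fun i _ => h i]
      exact hr.2
  let Φ : Fin m × Fin K ≃ Fin m × Fin K :=
    ⟨fun x => (σ x.2 x.1, x.2), fun x => ((σ x.2).symm x.1, x.2),
     fun x => by simp, fun x => by simp⟩
  let ρ : Equiv.Perm (Fin (m * K)) := (finProdFinEquiv.symm.trans Φ).trans finProdFinEquiv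
  have hsymm := hsym (m * K) (fun x => kron r t (finProdFinEquiv.symm x)) hpprob ρ
  have hcomp : ((fun x => kron r t (finProdFinEquiv.symm x)) ∘ ρ) =
      fun x => P (finProdFinEquiv.symm x) := by
    funext x
    show kron r t (finProdFinEquiv.symm (finProdFinEquiv (Φ (finProdFinEquiv.symm x)))) = _
    rw [Equiv.symm_apply_apply]
    show r (σ (finProdFinEquiv.symm x).2 ((finProdFinEquiv.symm x).1)) *
      t (finProdFinEquiv.symm x).2 = t (finProdFinEquiv.symm x).2 *
      r (σ (finProdFinEquiv.symm x).2 ((finProdFinEquiv.symm x).1))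
    exact mul_comm _ _
  rw [hcomp] at hsymm
  linarith [hsub', haddst, haddrt, hsymm]
end
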